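/- arXiv:2111.04553 — 4 statements merged into one kernel-verified Lean document; each statement's English description precedes it below -/
import Mathlib

section
/- For m < 0, suppose the equation x(k+1) = A(k)x(k) has an exponential dichotomy on (−∞, m] with projection P(k) of rank r. Then the equation has an exponential dichotomy on (−∞, 0] with a projection of rank r if and only if Φ(0,m) = A(−1)···A(m) is one-to-one on N(P(m)). -/
noncomputable section

open scoped BigOperators

/-- ℝⁿ as a Euclidean space. -/
abbrev Euc (n : ℕ) := EuclideanSpace ℝ (Fin n)

/-- The transition matrix `Φ(k,m) = A(k-1) ⋯ A(m)`, with `Φ(m,m) = 1`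
(and `Φ(k,m) = 1` when `k ≤ m`). -/
def Phi {n : ℕ} (A : ℤ → (Euc n →L[ℝ] Euc n)) (k m : ℤ) : Euc n →L[ℝ] Euc n :=
  (((List.range (k - m).toNat).map fun i => A (m + i)).reverse).prod

/-- `J` is an interval of integers. -/
def IsIntInterval (J : Set ℤ) : Prop :=
  ∀ ⦃a b c : ℤ⦄, a ∈ J → b ∈ J → a ≤ c → c ≤ b → c ∈ J

/-- The equation `x(k+1) = A(k) x(k)` has an exponential dichotomy on `J` with
projection family `P`, constant `K` and exponent `α`. -/
structure ExpDichotomyOn {n : ℕ} (A : ℤ → (Euc n →L[ℝ] Euc n)) (J : Set ℤ)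
    (P : ℤ → (Euc n →L[ℝ] Euc n)) (K α : ℝ) : Prop where
  one_le_K : 1 ≤ K
  alpha_pos : 0 < α
  proj : ∀ k ∈ J, P k ∘L P k = P k
  rank_const : ∀ k ∈ J, ∀ m ∈ J,
    Module.finrank ℝ (LinearMap.range (P k : Euc n →ₗ[ℝ] Euc n)) = Module.finrank ℝ (LinearMap.range (P m : Euc n →ₗ[ℝ] Euc n))
  invariance : ∀ m ∈ J, ∀ k ∈ J, m ≤ k → Phi A k m ∘L P m = P k ∘L Phi A k m
  forward : ∀ m ∈ J, ∀ k ∈ J, m ≤ k →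
    ‖Phi A k m ∘L P m‖ ≤ K * Real.exp (-α * ((k : ℝ) - (m : ℝ)))
  bijOn : ∀ k : ℤ, k ∈ J → k + 1 ∈ J →
    Set.BijOn (A k) (LinearMap.ker (P k : Euc n →ₗ[ℝ] Euc n) : Set (Euc n)) (LinearMap.ker (P (k + 1) : Euc n →ₗ[ℝ] Euc n) : Set (Euc n))
  backward : ∃ Ψ : ℤ → ℤ → (Euc n →L[ℝ] Euc n), ∀ m ∈ J, ∀ k ∈ J, m ≤ k →
    (∀ x ∈ LinearMap.ker (P m : Euc n →ₗ[ℝ] Euc n), Ψ m k (Phi A k m x) = x) ∧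
    (∀ x ∈ LinearMap.ker (P k : Euc n →ₗ[ℝ] Euc n), Ψ m k x ∈ LinearMap.ker (P m : Euc n →ₗ[ℝ] Euc n) ∧ Phi A k m (Ψ m k x) = x) ∧
    ‖Ψ m k ∘L (1 - P k)‖ ≤ K * Real.exp (-α * ((k : ℝ) - (m : ℝ)))

set_option synthInstance.maxHeartbeats 1000000
set_option maxHeartbeats 4000000

lemma Phi_of_le {n : ℕ} (A : ℤ → (Euc n →L[ℝ] Euc n)) {k m : ℤ} (h : k ≤ m) :
    Phi A k m = 1 := by
  have : (k - m).toNat = 0 := by omega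
  simp [Phi, this]
lemma Phi_succ {n : ℕ} (A : ℤ → (Euc n →L[ℝ] Euc n)) {k m : ℤ} (h : m ≤ k) :
    Phi A (k+1) m = A k ∘L Phi A k m := by
  have h1 : (k + 1 - m).toNat = (k - m).toNat + 1 := by omega
  have h2 : m + ((k - m).toNat : ℤ) = k := by omega
  have h3 : (k - m) ⊔ 0 = k - m := max_eq_left (by omega)
  simp [Phi, h1, List.range_succ, h2, h3]
  rfl

lemma Phi_comp {n : ℕ} (A : ℤ → (Euc n →L[ℝ] Euc n)) {j k l : ℤ} (hjk : j ≤ k) (hkl : k ≤ l) :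
    Phi A l j = Phi A l k ∘L Phi A k j := by
  refine Int.le_induction (motive := fun l _ => Phi A l j = Phi A l k ∘L Phi A k j) ?_ ?_ l hkl
  · show Phi A k j = Phi A k k ∘L Phi A k j
    rw [Phi_of_le A le_rfl]; ext x; simp
  · intro l hl ih
    rw [Phi_succ A (hjk.trans hl), Phi_succ A hl, ih]
    ext x; simp

lemma Phi_succ_self {n : ℕ} (A : ℤ → (Euc n →L[ℝ] Euc n)) (k : ℤ) :
    Phi A (k+1) k = A k := by
  rw [Phi_succ A le_rfl, Phi_of_le A le_rfl]; ext x; simp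

lemma clm_map_map {n : ℕ} (f g : Euc n →L[ℝ] Euc n) (p : Submodule ℝ (Euc n)) :
    p.map ((f ∘L g : Euc n →L[ℝ] Euc n) : Euc n →ₗ[ℝ] Euc n) = (p.map (g : Euc n →ₗ[ℝ] Euc n)).map (f : Euc n →ₗ[ℝ] Euc n) := by
  ext x
  simp only [Submodule.mem_map, ContinuousLinearMap.coe_comp', Function.comp_apply]
  constructor
  · rintro ⟨y, hy, rfl⟩; exact ⟨g y, ⟨y, hy, rfl⟩, rfl⟩
  · rintro ⟨z, ⟨y, hy, rfl⟩, rfl⟩; exact ⟨y, hy, rfl⟩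

lemma clm_map_one {n : ℕ} (p : Submodule ℝ (Euc n)) :
    p.map ((1 : Euc n →L[ℝ] Euc n) : Euc n →ₗ[ℝ] Euc n) = p := by
  ext x; simp [Submodule.mem_map]

lemma one_sub_apply_of_ker {n : ℕ} (R : Euc n →L[ℝ] Euc n) (v : Euc n) (h : R v = 0) :
    (1 - R) v = v := by
  rw [ContinuousLinearMap.sub_apply, ContinuousLinearMap.one_apply, h, sub_zero]

lemma exists_bound1 (f : ℤ → ℝ) (m : ℤ) : ∃ C, 0 ≤ C ∧ ∀ k, m ≤ k → k ≤ 0 → f k ≤ C := by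
  obtain ⟨M, hM⟩ := Finset.exists_le ((Finset.Icc m 0).image f)
  exact ⟨max M 0, le_max_right _ _, fun k h1 h2 => le_trans
    (hM _ (Finset.mem_image_of_mem f (Finset.mem_Icc.mpr ⟨h1, h2⟩))) (le_max_left _ _)⟩

lemma exists_bound2 (f : ℤ → ℤ → ℝ) (m : ℤ) :
    ∃ C, 0 ≤ C ∧ ∀ j k, m ≤ j → j ≤ 0 → m ≤ k → k ≤ 0 → f j k ≤ C := by
  obtain ⟨M, hM⟩ := Finset.exists_le (((Finset.Icc m 0) ×ˢ (Finset.Icc m 0)).image fun p => f p.1 p.2)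
  refine ⟨max M 0, le_max_right _ _, fun j k h1 h2 h3 h4 => le_trans ?_ (le_max_left _ _)⟩
  exact hM _ (Finset.mem_image_of_mem (f := fun p => f p.1 p.2) (a := (j,k)) (Finset.mem_product.mpr
    ⟨Finset.mem_Icc.mpr ⟨h1, h2⟩, Finset.mem_Icc.mpr ⟨h3, h4⟩⟩))

set_option synthInstance.maxHeartbeats 1000000 in
lemma graph_bound {E : Type*} [NormedAddCommGroup E] [NormedSpace ℝ E] [FiniteDimensional ℝ E]
    (T : E →L[ℝ] E) (S : Submodule ℝ E) (hinj : ∀ x ∈ S, T x = 0 → x = 0) :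
    ∃ c, 0 ≤ c ∧ ∀ x ∈ S, ‖x‖ ≤ c * ‖T x‖ := by
  set L : S →ₗ[ℝ] E := T.toLinearMap ∘ₗ S.subtype with hL
  have hLinj : Function.Injective L := by
    intro a b hab
    have h1 : T ((a : E) - (b : E)) = 0 := by
      rw [map_sub, sub_eq_zero]; exact hab
    have h2 := hinj _ (S.sub_mem a.2 b.2) h1
    exact Subtype.ext (sub_eq_zero.mp h2)
  set e := (LinearEquiv.ofInjective L hLinj).toContinuousLinearEquiv with he
  set c := ‖(e.symm : LinearMap.range L →L[ℝ] S)‖ with hc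
  have hc0 : 0 ≤ c := by
    rw [hc]; exact norm_nonneg ((e.symm : LinearMap.range L →L[ℝ] S))
  refine ⟨c, hc0, fun x hx => ?_⟩
  set xs : S := ⟨x, hx⟩
  have h3 : ‖x‖ = ‖xs‖ := rfl
  have h4 : xs = e.symm (e xs) := (e.symm_apply_apply xs).symm
  have h5 : ‖e.symm (e xs)‖ ≤ c * ‖e xs‖ :=
    (e.symm : LinearMap.range L →L[ℝ] S).le_opNorm (e xs)
  have h6 : ‖e xs‖ = ‖T x‖ := by
    have : ((e xs : LinearMap.range L) : E) = T x := rfl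
    rw [← this]; rfl
  rw [h3, h4]; rw [h6] at h5; exact h5

set_option maxHeartbeats 2000000

theorem bwd_dir {n : ℕ} (A P : ℤ → (Euc n →L[ℝ] Euc n)) (K α : ℝ)
    (m : ℤ) (hm : m < 0) (r : ℕ)
    (hED : ExpDichotomyOn A {k : ℤ | k ≤ m} P K α)
    (hrank : Module.finrank ℝ (LinearMap.range (P m : Euc n →ₗ[ℝ] Euc n)) = r)
    (hinj : Set.InjOn (Phi A 0 m) (LinearMap.ker (P m : Euc n →ₗ[ℝ] Euc n) : Set (Euc n))) :
    ∃ (Q : ℤ → (Euc n →L[ℝ] Euc n)) (K' α' : ℝ),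
        ExpDichotomyOn A {k : ℤ | k ≤ 0} Q K' α' ∧
        Module.finrank ℝ (LinearMap.range (Q 0 : Euc n →ₗ[ℝ] Euc n)) = r := by
  obtain ⟨Ψ, hΨ⟩ := hED.backward
  have memJ : ∀ {k : ℤ}, k ≤ m → k ∈ {k : ℤ | k ≤ m} := fun h => Set.mem_setOf_eq ▸ h
  have hα := hED.alpha_pos
  have hK1 := hED.one_le_K
  have hK0 : (0:ℝ) < K := lt_of_lt_of_le one_pos hK1
  have hproj : ∀ k, k ≤ m → P k ∘L P k = P k := fun k hk => hED.proj k (memJ hk)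
  have hinvP : ∀ j k, j ≤ k → k ≤ m → Phi A k j ∘L P j = P k ∘L Phi A k j :=
    fun j k h1 h2 => hED.invariance j (memJ (h1.trans h2)) k (memJ h2) h1
  have hinvP' : ∀ j k, j ≤ k → k ≤ m → ∀ x, Phi A k j (P j x) = P k (Phi A k j x) := by
    intro j k h1 h2 x
    have := congrArg (fun T : Euc n →L[ℝ] Euc n => T x) (hinvP j k h1 h2)
    simpa using this
  have hkermap : ∀ j k, j ≤ k → k ≤ m → ∀ x ∈ LinearMap.ker (P j : Euc n →ₗ[ℝ] Euc n),
      Phi A k j x ∈ LinearMap.ker (P k : Euc n →ₗ[ℝ] Euc n) := by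
    intro j k h1 h2 x hx
    have hx0 : P j x = 0 := hx
    have := hinvP' j k h1 h2 x
    rw [hx0, map_zero] at this
    exact LinearMap.mem_ker.mpr this.symm
  have hinjP : ∀ j k, j ≤ k → k ≤ m → Set.InjOn (Phi A k j) (LinearMap.ker (P j : Euc n →ₗ[ℝ] Euc n) : Set (Euc n)) := by
    intro j k h1 h2 x hx y hy hxy
    obtain ⟨l1, _, _⟩ := hΨ j (memJ (h1.trans h2)) k (memJ h2) h1
    rw [← l1 x hx, ← l1 y hy, hxy]
  have MAPEQm : ∀ j k, j ≤ k → k ≤ m →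
      Submodule.map (Phi A k j : Euc n →ₗ[ℝ] Euc n) (LinearMap.ker (P j : Euc n →ₗ[ℝ] Euc n)) = LinearMap.ker (P k : Euc n →ₗ[ℝ] Euc n) := by
    intro j k h1
    refine Int.le_induction
      (motive := fun k _ => k ≤ m → Submodule.map (Phi A k j : Euc n →ₗ[ℝ] Euc n) (LinearMap.ker (P j : Euc n →ₗ[ℝ] Euc n)) = LinearMap.ker (P k : Euc n →ₗ[ℝ] Euc n))
      ?_ ?_ k h1
    · intro _
      rw [Phi_of_le A le_rfl, clm_map_one]
    · intro k hk ih hk1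
      have hkm : k ≤ m := by omega
      rw [Phi_succ A hk, clm_map_map, ih hkm]
      have hbij := hED.bijOn k (memJ hkm) (memJ hk1)
      ext x
      simp only [Submodule.mem_map]
      constructor
      · rintro ⟨y, hy, rfl⟩
        exact hbij.mapsTo hy
      · intro hx
        obtain ⟨y, hy, hyx⟩ := hbij.surjOn hx
        exact ⟨y, hy, hyx⟩
  set U : ℤ → Submodule ℝ (Euc n) :=
    fun k => if m ≤ k then (LinearMap.ker (P m : Euc n →ₗ[ℝ] Euc n)).map (Phi A k m : Euc n →ₗ[ℝ] Euc n) else LinearMap.ker (P k : Euc n →ₗ[ℝ] Euc n) with hU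
  have hUge : ∀ k, m ≤ k → U k = (LinearMap.ker (P m : Euc n →ₗ[ℝ] Euc n)).map (Phi A k m : Euc n →ₗ[ℝ] Euc n) := by
    intro k hk; simp only [hU, if_pos hk]
  have hUle : ∀ k, k ≤ m → U k = LinearMap.ker (P k : Euc n →ₗ[ℝ] Euc n) := by
    intro k hk
    rcases lt_or_eq_of_le hk with h | h
    · simp only [hU, if_neg (by omega : ¬ m ≤ k)]
    · subst h
      rw [hUge k le_rfl, Phi_of_le A le_rfl, clm_map_one]
  have hUm : U m = LinearMap.ker (P m : Euc n →ₗ[ℝ] Euc n) := hUle m le_rfl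
  have MAPEQ : ∀ j k, j ≤ k → k ≤ 0 → Submodule.map (Phi A k j : Euc n →ₗ[ℝ] Euc n) (U j) = U k := by
    intro j k hjk hk0
    by_cases hkm : k ≤ m
    · rw [hUle j (hjk.trans hkm), hUle k hkm]; exact MAPEQm j k hjk hkm
    · push_neg at hkm
      by_cases hjm : m ≤ j
      · rw [hUge j hjm, hUge k (by omega), ← clm_map_map, ← Phi_comp A hjm hjk]
      · push_neg at hjm
        rw [hUle j hjm.le, hUge k (by omega)]
        rw [Phi_comp A hjm.le (by omega : m ≤ k), clm_map_map]
        rw [MAPEQm j m hjm.le le_rfl]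
  have hmapsto : ∀ j k, j ≤ k → k ≤ 0 → ∀ x ∈ U j, Phi A k j x ∈ U k := by
    intro j k h1 h2 x hx
    rw [← MAPEQ j k h1 h2]
    exact Submodule.mem_map.mpr ⟨x, hx, rfl⟩
  have INJ0 : ∀ j, j ≤ 0 → Set.InjOn (Phi A 0 j) ((U j : Set (Euc n))) := by
    intro j hj0
    by_cases hjm : j ≤ m
    · intro x hx y hy hxy
      rw [hUle j hjm] at hx hy
      have hx' : Phi A m j x ∈ LinearMap.ker (P m : Euc n →ₗ[ℝ] Euc n) := hkermap j m hjm le_rfl x hx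
      have hy' : Phi A m j y ∈ LinearMap.ker (P m : Euc n →ₗ[ℝ] Euc n) := hkermap j m hjm le_rfl y hy
      have hcomp := Phi_comp A hjm hm.le
      have heq : Phi A 0 m (Phi A m j x) = Phi A 0 m (Phi A m j y) := by
        have e1 := congrArg (fun T : Euc n →L[ℝ] Euc n => T x) hcomp
        have e2 := congrArg (fun T : Euc n →L[ℝ] Euc n => T y) hcomp
        simp only [ContinuousLinearMap.comp_apply] at e1 e2
        rw [← e1, ← e2]; exact hxy
      exact hinjP j m hjm le_rfl hx hy (hinj hx' hy' heq)
    · push_neg at hjm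
      intro x hx y hy hxy
      rw [hUge j hjm.le] at hx hy
      obtain ⟨u, hu, rfl⟩ := Submodule.mem_map.mp hx
      obtain ⟨v, hv, rfl⟩ := Submodule.mem_map.mp hy
      have hcomp := Phi_comp A hjm.le hj0
      have e1 : Phi A 0 j (Phi A j m u) = Phi A 0 m u := by
        rw [Phi_comp A hjm.le hj0]; rfl
      have e2 : Phi A 0 j (Phi A j m v) = Phi A 0 m v := by
        rw [Phi_comp A hjm.le hj0]; rfl
      simp only [ContinuousLinearMap.coe_coe] at hxy; rw [e1, e2] at hxy
      rw [hinj hu hv hxy]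
  have INJ : ∀ j k, j ≤ k → k ≤ 0 → Set.InjOn (Phi A k j) ((U j : Set (Euc n))) := by
    intro j k h1 h2 x hx y hy hxy
    have e1 : Phi A 0 j x = Phi A 0 k (Phi A k j x) := by rw [Phi_comp A h1 h2]; rfl
    have e2 : Phi A 0 j y = Phi A 0 k (Phi A k j y) := by rw [Phi_comp A h1 h2]; rfl
    exact INJ0 j (h1.trans h2) hx hy (by rw [e1, e2, hxy])
  have hfr : ∀ j k, j ≤ k → k ≤ 0 →
      Module.finrank ℝ (U j) = Module.finrank ℝ (U k) := by
    intro j k h1 h2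
    have hres : ∀ x ∈ U j, (Phi A k j).toLinearMap x ∈ U k := by
      intro x hx; exact hmapsto j k h1 h2 x hx
    set F := ((Phi A k j).toLinearMap).restrict hres with hF
    have hFbij : Function.Bijective F := by
      constructor
      · intro a b hab
        have h' : Phi A k j (a : Euc n) = Phi A k j (b : Euc n) := by
          have := congrArg (Subtype.val) hab
          simpa [hF, LinearMap.restrict_apply] using this
        exact Subtype.ext (INJ j k h1 h2 a.2 b.2 h')
      · intro y
        have hy : (y : Euc n) ∈ Submodule.map (Phi A k j : Euc n →ₗ[ℝ] Euc n) (U j) := by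
          rw [MAPEQ j k h1 h2]; exact y.2
        obtain ⟨x, hx, hxy⟩ := Submodule.mem_map.mp hy
        exact ⟨⟨x, hx⟩, Subtype.ext (by simpa [hF, LinearMap.restrict_apply] using hxy)⟩
    exact (LinearEquiv.ofBijective F hFbij).finrank_eq
  have hEucn : Module.finrank ℝ (Euc n) = n := by simp [finrank_euclideanSpace]
  have hd : Module.finrank ℝ (LinearMap.ker (P m : Euc n →ₗ[ℝ] Euc n)) + r = n := by
    have h2 := LinearMap.finrank_range_add_finrank_ker ((P m).toLinearMap)
    have e1 : LinearMap.range (P m).toLinearMap = LinearMap.range (P m : Euc n →ₗ[ℝ] Euc n) := rfl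
    have e2 : LinearMap.ker (P m).toLinearMap = LinearMap.ker (P m : Euc n →ₗ[ℝ] Euc n) := rfl
    rw [e1, e2, hrank, hEucn] at h2
    omega
  have hdimU : ∀ k, k ≤ 0 → Module.finrank ℝ (U k) + r = n := by
    intro k hk
    by_cases hkm : k ≤ m
    · rw [hfr k m hkm hm.le, hUm]; exact hd
    · rw [← hfr m k (by omega) hk, hUm]; exact hd
  obtain ⟨Z', hZ'⟩ := Submodule.exists_isCompl (U 0)
  set S : ℤ → Submodule ℝ (Euc n) := fun k => Z'.comap (Phi A 0 k : Euc n →ₗ[ℝ] Euc n) with hS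
  have hSmem : ∀ k (x : Euc n), x ∈ S k ↔ Phi A 0 k x ∈ Z' := fun k x => Submodule.mem_comap
  have hSmapsto : ∀ j k, j ≤ k → k ≤ 0 → ∀ x ∈ S j, Phi A k j x ∈ S k := by
    intro j k h1 h2 x hx
    rw [hSmem] at hx ⊢
    have e : Phi A 0 j x = Phi A 0 k (Phi A k j x) := by rw [Phi_comp A h1 h2]; rfl
    rwa [← e]
  have hdisj : ∀ k, k ≤ 0 → ∀ x, x ∈ S k → x ∈ U k → x = 0 := by
    intro k hk x hxS hxU
    have h1 : Phi A 0 k x ∈ U 0 := hmapsto k 0 hk le_rfl x hxU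
    have h2 : Phi A 0 k x ∈ Z' := (hSmem k x).mp hxS
    have h3 : Phi A 0 k x = 0 := Submodule.disjoint_def.mp hZ'.disjoint _ h1 h2
    have h0 : Phi A 0 k (0 : Euc n) = 0 := map_zero _
    exact INJ0 k hk hxU (Submodule.zero_mem (U k)) (by rw [h3, h0])
  have hbot : Module.finrank ℝ (⊥ : Submodule ℝ (Euc n)) = 0 := finrank_bot ℝ _
  have hdimS : ∀ k, k ≤ 0 → Module.finrank ℝ (S k) = r := by
    intro k hk
    have hinf : S k ⊓ U k = ⊥ := by
      rw [eq_bot_iff]; intro x hx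
      exact (Submodule.mem_bot ℝ).mpr (hdisj k hk x hx.1 hx.2)
    have hsup := Submodule.finrank_sup_add_finrank_inf_eq (S k) (U k)
    rw [hinf] at hsup
    have hle2 := Submodule.finrank_le (S k ⊔ U k)
    set g := (Submodule.linearProjOfIsCompl (U 0) Z' hZ') ∘ₗ (Phi A 0 k).toLinearMap with hg
    have hkerg : LinearMap.ker g = S k := by
      erw [hg, LinearMap.ker_comp, Submodule.linearProjOfIsCompl_ker]
    have hrn := LinearMap.finrank_range_add_finrank_ker g
    rw [hkerg] at hrn
    have hrle : Module.finrank ℝ (LinearMap.range g) ≤ Module.finrank ℝ (U 0) :=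
      Submodule.finrank_le _
    have h4 := hdimU 0 le_rfl
    have h5 := hdimU k hk
    omega
  have hcompl : ∀ k, k ≤ 0 → IsCompl (S k) (U k) := by
    intro k hk
    have hdis : Disjoint (S k) (U k) := Submodule.disjoint_def.mpr (hdisj k hk)
    have hinf : S k ⊓ U k = ⊥ := disjoint_iff.mp hdis
    have hsup := Submodule.finrank_sup_add_finrank_inf_eq (S k) (U k)
    rw [hinf] at hsup
    have htop : S k ⊔ U k = ⊤ := by
      apply Submodule.eq_top_of_finrank_eq
      have h4 := hdimU k hk
      have h5 := hdimS k hk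
      omega
    exact ⟨hdis, codisjoint_iff.mpr htop⟩
  -- construct the projection family
  have hQex : ∃ Q : ℤ → (Euc n →L[ℝ] Euc n), ∀ k, k ≤ 0 →
      (∀ x, Q k x ∈ S k) ∧ (∀ x ∈ S k, Q k x = x) ∧ (∀ x ∈ U k, Q k x = 0) ∧
      (∀ x, x - Q k x ∈ U k) := by
    classical
    refine ⟨fun k => if h : k ≤ 0 then
      LinearMap.toContinuousLinearMap
        ((S k).subtype ∘ₗ Submodule.linearProjOfIsCompl (S k) (U k) (hcompl k h))
      else 0, ?_⟩
    intro k hk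
    have happ : ∀ x : Euc n,
        (if h : k ≤ 0 then LinearMap.toContinuousLinearMap
          ((S k).subtype ∘ₗ Submodule.linearProjOfIsCompl (S k) (U k) (hcompl k h)) else 0) x
        = ((Submodule.linearProjOfIsCompl (S k) (U k) (hcompl k hk)) x : Euc n) := by
      intro x
      rw [dif_pos hk]
      simp [LinearMap.coe_toContinuousLinearMap']
    refine ⟨?_, ?_, ?_, ?_⟩
    · intro x; rw [happ]; exact ((Submodule.linearProjOfIsCompl (S k) (U k) (hcompl k hk)) x).2
    · intro x hx; rw [happ]
      exact congrArg Subtype.val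
        (Submodule.linearProjOfIsCompl_apply_left (hcompl k hk) ⟨x, hx⟩)
    · intro x hx; rw [happ]
      exact congrArg Subtype.val
        (Submodule.linearProjOfIsCompl_apply_right (hcompl k hk) ⟨x, hx⟩)
    · intro x
      rw [happ]
      have hx : x ∈ S k ⊔ U k := by
        rw [codisjoint_iff.mp (hcompl k hk).codisjoint]; trivial
      obtain ⟨s, hs, u, hu, hsu⟩ := Submodule.mem_sup.mp hx
      have e2 : (Submodule.linearProjOfIsCompl (S k) (U k) (hcompl k hk)) s = ⟨s, hs⟩ :=
        Submodule.linearProjOfIsCompl_apply_left (hcompl k hk) ⟨s, hs⟩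
      have e3 : (Submodule.linearProjOfIsCompl (S k) (U k) (hcompl k hk)) u = 0 :=
        Submodule.linearProjOfIsCompl_apply_right (hcompl k hk) ⟨u, hu⟩
      have e1 : (Submodule.linearProjOfIsCompl (S k) (U k) (hcompl k hk)) x = ⟨s, hs⟩ := by
        rw [← hsu, map_add, e2, e3, add_zero]
      rw [e1]
      have e4 : x - ((⟨s, hs⟩ : S k) : Euc n) = u := by
        show x - s = u
        rw [← hsu]; abel
      rw [e4]; exact hu
  obtain ⟨Q, hQs⟩ := hQex
  have hQmemS : ∀ k, k ≤ 0 → ∀ x, Q k x ∈ S k := fun k hk => (hQs k hk).1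
  have hQfix : ∀ k, k ≤ 0 → ∀ x ∈ S k, Q k x = x := fun k hk => (hQs k hk).2.1
  have hQzero : ∀ k, k ≤ 0 → ∀ x ∈ U k, Q k x = 0 := fun k hk => (hQs k hk).2.2.1
  have hQsub : ∀ k, k ≤ 0 → ∀ x, x - Q k x ∈ U k := fun k hk => (hQs k hk).2.2.2
  have hQproj : ∀ k, k ≤ 0 → Q k ∘L Q k = Q k := by
    intro k hk
    apply ContinuousLinearMap.ext
    intro x
    rw [ContinuousLinearMap.comp_apply]
    exact hQfix k hk (Q k x) (hQmemS k hk x)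
  have hQkerU : ∀ k, k ≤ 0 → LinearMap.ker (Q k : Euc n →ₗ[ℝ] Euc n) = U k := by
    intro k hk; ext x
    simp only [LinearMap.mem_ker]
    constructor
    · intro h
      have := hQsub k hk x
      rw [ContinuousLinearMap.coe_coe] at h; rwa [h, sub_zero] at this
    · exact hQzero k hk x
  have hQrangeS : ∀ k, k ≤ 0 → LinearMap.range (Q k : Euc n →ₗ[ℝ] Euc n) = S k := by
    intro k hk; ext y
    simp only [LinearMap.mem_range]
    constructor
    · rintro ⟨x, rfl⟩; exact hQmemS k hk x
    · intro hy; exact ⟨y, hQfix k hk y hy⟩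
  have hQinv : ∀ j k, j ≤ k → k ≤ 0 → Phi A k j ∘L Q j = Q k ∘L Phi A k j := by
    intro j k h1 h2
    have hj0 : j ≤ 0 := h1.trans h2
    apply ContinuousLinearMap.ext
    intro x
    simp only [ContinuousLinearMap.comp_apply]
    have e1 : Phi A k j x = Phi A k j (Q j x) + Phi A k j (x - Q j x) := by
      rw [← map_add]; congr 1; abel
    rw [e1, map_add]
    rw [hQfix k h2 _ (hSmapsto j k h1 h2 _ (hQmemS j hj0 x)),
        hQzero k h2 _ (hmapsto j k h1 h2 _ (hQsub j hj0 x)), add_zero]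
  -- graph constant at time m
  obtain ⟨c0, hc00, hc0⟩ := graph_bound (P m) (S m) (by
    intro x hx hPx
    exact hdisj m hm.le x hx (by rw [hUm]; exact LinearMap.mem_ker.mpr hPx))
  set c1 := c0 + 1 with hc1def
  have hc10 : 0 ≤ c1 := by linarith
  have hgraph : ∀ σ ∈ S m, ‖σ - P m σ‖ ≤ c1 * ‖P m σ‖ := by
    intro σ hσ
    have h1 : ‖σ‖ ≤ c0 * ‖P m σ‖ := hc0 σ hσ
    calc ‖σ - P m σ‖ ≤ ‖σ‖ + ‖P m σ‖ := norm_sub_le _ _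
      _ ≤ c0 * ‖P m σ‖ + 1 * ‖P m σ‖ := by
          rw [one_mul]; exact add_le_add h1 le_rfl
      _ = c1 * ‖P m σ‖ := by rw [hc1def]; ring
  set C1 := K + c1 * K * K with hC1def
  have hC10 : 0 ≤ C1 := by
    have h := mul_nonneg (mul_nonneg hc10 hK0.le) hK0.le
    rw [hC1def]; linarith
  have FB1 : ∀ j k, j ≤ k → k ≤ m → ∀ x : Euc n,
      ‖Phi A k j (Q j x)‖ ≤ C1 * Real.exp (-α * ((k:ℝ) - (j:ℝ))) * ‖x‖ := by
    intro j k hjk hkm x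
    have hjm : j ≤ m := hjk.trans hkm
    have hj0 : j ≤ 0 := by omega
    set p := P j x with hp
    set w := Q j x - p with hw
    have hprojx : P j (P j x) = P j x := by
      have h1 := congrArg (fun T : Euc n →L[ℝ] Euc n => T x) (hproj j hjm)
      simpa using h1
    have hwker : w ∈ LinearMap.ker (P j : Euc n →ₗ[ℝ] Euc n) := by
      have h1 : Q j x - x ∈ U j := by
        have h2 := Submodule.neg_mem _ (hQsub j hj0 x)
        rwa [neg_sub] at h2
      have h2 : x - p ∈ LinearMap.ker (P j : Euc n →ₗ[ℝ] Euc n) := by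
        rw [LinearMap.mem_ker, ContinuousLinearMap.coe_coe, map_sub, hp, hprojx, sub_self]
      rw [hUle j hjm] at h1
      have h3 : w = (Q j x - x) + (x - p) := by rw [hw]; abel
      rw [h3]; exact Submodule.add_mem _ h1 h2
    have hpw : Q j x = p + w := by rw [hw]; abel
    have hσS : Phi A m j (Q j x) ∈ S m := hSmapsto j m hjm hm.le _ (hQmemS j hj0 x)
    have hPmσ : P m (Phi A m j (Q j x)) = Phi A m j p := by
      rw [← hinvP' j m hjm le_rfl (Q j x)]
      congr 1
      rw [hpw, map_add, hp, hprojx]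
      have hw0 : P j w = 0 := hwker
      rw [hw0, add_zero]
    have hb1 : ‖Phi A m j w‖ ≤ c1 * ‖Phi A m j p‖ := by
      have hσsub : Phi A m j (Q j x) - P m (Phi A m j (Q j x)) = Phi A m j w := by
        rw [hPmσ, ← map_sub]
      have h4 := hgraph _ hσS
      rw [hσsub, hPmσ] at h4
      exact h4
    have hb2 : ‖Phi A m j p‖ ≤ K * Real.exp (-α * ((m:ℝ) - (j:ℝ))) * ‖x‖ := by
      have h1 : Phi A m j p = (Phi A m j ∘L P j) x := rfl
      rw [h1]
      calc ‖(Phi A m j ∘L P j) x‖ ≤ ‖Phi A m j ∘L P j‖ * ‖x‖ :=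
            ContinuousLinearMap.le_opNorm _ _
        _ ≤ _ := mul_le_mul_of_nonneg_right
            (hED.forward j (memJ hjm) m (memJ le_rfl) hjm) (norm_nonneg x)
    obtain ⟨l1, l2, l3⟩ := hΨ k (memJ hkm) m (memJ le_rfl) hkm
    have hΦw_ker : Phi A k j w ∈ LinearMap.ker (P k : Euc n →ₗ[ℝ] Euc n) := hkermap j k hjk hkm w hwker
    have hmjw_ker : Phi A m j w ∈ LinearMap.ker (P m : Euc n →ₗ[ℝ] Euc n) := hkermap j m hjm le_rfl w hwker
    have hpull : Phi A k j w = Ψ k m (Phi A m j w) := by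
      have e : Phi A m j w = Phi A m k (Phi A k j w) := by rw [Phi_comp A hjk hkm]; rfl
      rw [e, l1 _ hΦw_ker]
    have hb3 : ‖Phi A k j w‖ ≤ K * Real.exp (-α * ((m:ℝ) - (k:ℝ))) * ‖Phi A m j w‖ := by
      rw [hpull]
      have e1 : (1 - P m) (Phi A m j w) = Phi A m j w := by
        have h5 : P m (Phi A m j w) = 0 := hmjw_ker
        simp [ContinuousLinearMap.sub_apply, h5]
      calc ‖Ψ k m (Phi A m j w)‖ = ‖(Ψ k m ∘L (1 - P m)) (Phi A m j w)‖ := by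
            rw [ContinuousLinearMap.comp_apply, e1]
        _ ≤ ‖Ψ k m ∘L (1 - P m)‖ * ‖Phi A m j w‖ := ContinuousLinearMap.le_opNorm _ _
        _ ≤ _ := mul_le_mul_of_nonneg_right l3 (norm_nonneg _)
    have hΦp : ‖Phi A k j p‖ ≤ K * Real.exp (-α * ((k:ℝ) - (j:ℝ))) * ‖x‖ := by
      have h1 : Phi A k j p = (Phi A k j ∘L P j) x := rfl
      rw [h1]
      calc ‖(Phi A k j ∘L P j) x‖ ≤ ‖Phi A k j ∘L P j‖ * ‖x‖ :=
            ContinuousLinearMap.le_opNorm _ _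
        _ ≤ _ := mul_le_mul_of_nonneg_right
            (hED.forward j (memJ hjm) k (memJ hkm) hjk) (norm_nonneg x)
    have hexp : Real.exp (-α * ((m:ℝ) - (k:ℝ))) * Real.exp (-α * ((m:ℝ) - (j:ℝ)))
        ≤ Real.exp (-α * ((k:ℝ) - (j:ℝ))) := by
      rw [← Real.exp_add]
      apply Real.exp_le_exp.mpr
      have hkm' : (k:ℝ) ≤ (m:ℝ) := by exact_mod_cast hkm
      nlinarith [hα.le]
    have hΦw2 : ‖Phi A k j w‖ ≤ (c1 * K * K * ‖x‖) *
        (Real.exp (-α * ((m:ℝ) - (k:ℝ))) * Real.exp (-α * ((m:ℝ) - (j:ℝ)))) := by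
      have h6 : ‖Phi A m j w‖ ≤ c1 * (K * Real.exp (-α * ((m:ℝ) - (j:ℝ))) * ‖x‖) :=
        hb1.trans (mul_le_mul_of_nonneg_left hb2 hc10)
      calc ‖Phi A k j w‖ ≤ K * Real.exp (-α * ((m:ℝ) - (k:ℝ))) * ‖Phi A m j w‖ := hb3
        _ ≤ K * Real.exp (-α * ((m:ℝ) - (k:ℝ))) *
            (c1 * (K * Real.exp (-α * ((m:ℝ) - (j:ℝ))) * ‖x‖)) := by
            apply mul_le_mul_of_nonneg_left h6
            positivity
        _ = (c1 * K * K * ‖x‖) *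
            (Real.exp (-α * ((m:ℝ) - (k:ℝ))) * Real.exp (-α * ((m:ℝ) - (j:ℝ)))) := by ring
    have hΦw3 : ‖Phi A k j w‖ ≤ (c1 * K * K * ‖x‖) * Real.exp (-α * ((k:ℝ) - (j:ℝ))) := by
      refine hΦw2.trans (mul_le_mul_of_nonneg_left hexp ?_)
      have := norm_nonneg x
      positivity
    have hsplit : Phi A k j (Q j x) = Phi A k j p + Phi A k j w := by
      rw [hpw, map_add]
    calc ‖Phi A k j (Q j x)‖ ≤ ‖Phi A k j p‖ + ‖Phi A k j w‖ := by
          rw [hsplit]; exact norm_add_le _ _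
      _ ≤ K * Real.exp (-α * ((k:ℝ) - (j:ℝ))) * ‖x‖ +
          (c1 * K * K * ‖x‖) * Real.exp (-α * ((k:ℝ) - (j:ℝ))) := add_le_add hΦp hΦw3
      _ = C1 * Real.exp (-α * ((k:ℝ) - (j:ℝ))) * ‖x‖ := by rw [hC1def]; ring
  have hQnorm1 : ∀ j, j ≤ m → ∀ x : Euc n, ‖Q j x‖ ≤ C1 * ‖x‖ := by
    intro j hjm x
    have h1 := FB1 j j le_rfl hjm x
    rw [Phi_of_le A le_rfl] at h1
    simpa using h1
  obtain ⟨M1, hM10, hM1⟩ := exists_bound1 (fun k => ‖Phi A k m‖) m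
  obtain ⟨MQ, hMQ0, hMQ⟩ := exists_bound1 (fun j => ‖Q j‖) m
  obtain ⟨M2, hM20, hM2⟩ := exists_bound2 (fun j k => ‖Phi A k j‖) m
  set E := Real.exp (-α * (m:ℝ)) with hEdef
  have hE1 : (1:ℝ) ≤ E := by
    rw [hEdef, show (1:ℝ) = Real.exp 0 from (Real.exp_zero).symm]
    apply Real.exp_le_exp.mpr
    have h1 : (m:ℝ) < 0 := by exact_mod_cast hm
    nlinarith
  have hE0 : (0:ℝ) < E := lt_of_lt_of_le one_pos hE1
  set CF := C1 + M1 * C1 * E + M2 * MQ * E with hCFdef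
  have haux1 : 0 ≤ M1 * C1 * E := mul_nonneg (mul_nonneg hM10 hC10) hE0.le
  have haux2 : 0 ≤ M2 * MQ * E := mul_nonneg (mul_nonneg hM20 hMQ0) hE0.le
  have hCF0 : 0 ≤ CF := by rw [hCFdef]; linarith
  have FB : ∀ j k, j ≤ k → k ≤ 0 → ∀ x : Euc n,
      ‖Phi A k j (Q j x)‖ ≤ CF * Real.exp (-α * ((k:ℝ) - (j:ℝ))) * ‖x‖ := by
    intro j k hjk hk0 x
    have hEx0 : (0:ℝ) < Real.exp (-α * ((k:ℝ) - (j:ℝ))) := Real.exp_pos _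
    by_cases hkm : k ≤ m
    · refine (FB1 j k hjk hkm x).trans ?_
      apply mul_le_mul_of_nonneg_right _ (norm_nonneg x)
      apply mul_le_mul_of_nonneg_right _ hEx0.le
      rw [hCFdef]; linarith
    · push_neg at hkm
      by_cases hjm : j ≤ m
      · have e1 : Phi A k j (Q j x) = Phi A k m (Phi A m j (Q j x)) := by
          rw [Phi_comp A hjm (by omega : m ≤ k)]; rfl
        have h2 : ‖Phi A m j (Q j x)‖ ≤ C1 * Real.exp (-α * ((m:ℝ) - (j:ℝ))) * ‖x‖ :=
          FB1 j m hjm le_rfl x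
        have h3 : ‖Phi A k m‖ ≤ M1 := hM1 k (by omega) hk0
        have hexpe : Real.exp (-α * ((m:ℝ) - (j:ℝ)))
            ≤ E * Real.exp (-α * ((k:ℝ) - (j:ℝ))) := by
          rw [hEdef, ← Real.exp_add]
          apply Real.exp_le_exp.mpr
          have hk' : (k:ℝ) ≤ 0 := by exact_mod_cast hk0
          nlinarith [mul_nonneg hα.le (neg_nonneg.mpr hk')]
        calc ‖Phi A k j (Q j x)‖ = ‖Phi A k m (Phi A m j (Q j x))‖ := by rw [e1]
          _ ≤ ‖Phi A k m‖ * ‖Phi A m j (Q j x)‖ := ContinuousLinearMap.le_opNorm _ _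
          _ ≤ M1 * (C1 * Real.exp (-α * ((m:ℝ) - (j:ℝ))) * ‖x‖) :=
              mul_le_mul h3 h2 (norm_nonneg _) hM10
          _ ≤ M1 * (C1 * (E * Real.exp (-α * ((k:ℝ) - (j:ℝ)))) * ‖x‖) := by
              apply mul_le_mul_of_nonneg_left _ hM10
              apply mul_le_mul_of_nonneg_right _ (norm_nonneg x)
              exact mul_le_mul_of_nonneg_left hexpe hC10
          _ = (M1 * C1 * E) * Real.exp (-α * ((k:ℝ) - (j:ℝ))) * ‖x‖ := by ring
          _ ≤ CF * Real.exp (-α * ((k:ℝ) - (j:ℝ))) * ‖x‖ := by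
              apply mul_le_mul_of_nonneg_right _ (norm_nonneg x)
              apply mul_le_mul_of_nonneg_right _ hEx0.le
              rw [hCFdef]; linarith
      · push_neg at hjm
        have h3 : ‖Phi A k j‖ ≤ M2 := hM2 j k (by omega) (by omega) (by omega) hk0
        have h4 : ‖Q j x‖ ≤ MQ * ‖x‖ := by
          refine (ContinuousLinearMap.le_opNorm _ _).trans ?_
          exact mul_le_mul_of_nonneg_right (hMQ j (by omega) (by omega)) (norm_nonneg x)
        have hone : (1:ℝ) ≤ E * Real.exp (-α * ((k:ℝ) - (j:ℝ))) := by
          rw [hEdef, ← Real.exp_add, show (1:ℝ) = Real.exp 0 from (Real.exp_zero).symm]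
          apply Real.exp_le_exp.mpr
          have h5 : (k:ℝ) - (j:ℝ) ≤ -(m:ℝ) := by
            have h6 : k - j ≤ -m := by omega
            exact_mod_cast h6
          nlinarith [mul_nonneg hα.le (by linarith : (0:ℝ) ≤ -(m:ℝ) - ((k:ℝ) - (j:ℝ)))]
        calc ‖Phi A k j (Q j x)‖ ≤ ‖Phi A k j‖ * ‖Q j x‖ := ContinuousLinearMap.le_opNorm _ _
          _ ≤ M2 * (MQ * ‖x‖) := mul_le_mul h3 h4 (norm_nonneg _) hM20
          _ = (M2 * MQ) * ‖x‖ * 1 := by ring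
          _ ≤ (M2 * MQ) * ‖x‖ * (E * Real.exp (-α * ((k:ℝ) - (j:ℝ)))) := by
              apply mul_le_mul_of_nonneg_left hone
              exact mul_nonneg (mul_nonneg hM20 hMQ0) (norm_nonneg x)
          _ = (M2 * MQ * E) * Real.exp (-α * ((k:ℝ) - (j:ℝ))) * ‖x‖ := by ring
          _ ≤ CF * Real.exp (-α * ((k:ℝ) - (j:ℝ))) * ‖x‖ := by
              apply mul_le_mul_of_nonneg_right _ (norm_nonneg x)
              apply mul_le_mul_of_nonneg_right _ hEx0.le
              rw [hCFdef]; linarith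
  -- inverse family on unstable spaces
  have hPsiT : ∀ j k, j ≤ k → k ≤ 0 → ∃ T : Euc n →L[ℝ] Euc n,
      (∀ x, T x ∈ U j) ∧ (∀ x ∈ U k, Phi A k j (T x) = x) ∧
      (∀ x ∈ U j, T (Phi A k j x) = x) ∧ (∀ x ∈ S k, T x = 0) := by
    intro j k h1 h2
    have hres : ∀ x ∈ U j, (Phi A k j).toLinearMap x ∈ U k :=
      fun x hx => hmapsto j k h1 h2 x hx
    set F := ((Phi A k j).toLinearMap).restrict hres with hF
    have hFbij : Function.Bijective F := by
      constructor
      · intro a b hab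
        have h' : Phi A k j (a : Euc n) = Phi A k j (b : Euc n) := by
          have := congrArg (Subtype.val) hab
          simpa [hF, LinearMap.restrict_apply] using this
        exact Subtype.ext (INJ j k h1 h2 a.2 b.2 h')
      · intro y
        have hy : (y : Euc n) ∈ Submodule.map (Phi A k j : Euc n →ₗ[ℝ] Euc n) (U j) := by
          rw [MAPEQ j k h1 h2]; exact y.2
        obtain ⟨x, hx, hxy⟩ := Submodule.mem_map.mp hy
        exact ⟨⟨x, hx⟩, Subtype.ext (by simpa [hF, LinearMap.restrict_apply] using hxy)⟩
    set e := LinearEquiv.ofBijective F hFbij with he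
    set pr := Submodule.linearProjOfIsCompl (U k) (S k) (hcompl k h2).symm with hpr
    set T0 : Euc n →ₗ[ℝ] Euc n :=
      (U j).subtype ∘ₗ (e.symm : U k →ₗ[ℝ] U j) ∘ₗ pr with hT0
    have happ : ∀ x : Euc n, LinearMap.toContinuousLinearMap T0 x = ((e.symm (pr x) : U j) : Euc n) := by
      intro x
      rw [LinearMap.coe_toContinuousLinearMap']
      rfl
    have hFcoe : ∀ z : U j, ((F z : U k) : Euc n) = Phi A k j (z : Euc n) := by
      intro z; rw [hF]; rfl
    refine ⟨LinearMap.toContinuousLinearMap T0, ?_, ?_, ?_, ?_⟩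
    · intro x; rw [happ]; exact (e.symm (pr x)).2
    · intro x hx
      rw [happ]
      have e1 : pr x = ⟨x, hx⟩ :=
        Submodule.linearProjOfIsCompl_apply_left (hcompl k h2).symm ⟨x, hx⟩
      rw [e1]
      have e2 : F (e.symm ⟨x, hx⟩) = e (e.symm ⟨x, hx⟩) := rfl
      have e3 : e (e.symm ⟨x, hx⟩) = ⟨x, hx⟩ := e.apply_symm_apply _
      have e4 := hFcoe (e.symm ⟨x, hx⟩)
      rw [e2, e3] at e4
      exact e4.symm
    · intro x hx
      have hmem : Phi A k j x ∈ U k := hmapsto j k h1 h2 x hx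
      rw [happ]
      have e1 : pr (Phi A k j x) = ⟨Phi A k j x, hmem⟩ :=
        Submodule.linearProjOfIsCompl_apply_left (hcompl k h2).symm ⟨Phi A k j x, hmem⟩
      rw [e1]
      have e2 : e ⟨x, hx⟩ = ⟨Phi A k j x, hmem⟩ := by
        apply Subtype.ext
        rw [show e ⟨x, hx⟩ = F ⟨x, hx⟩ from rfl]
        exact hFcoe ⟨x, hx⟩
      rw [← e2, e.symm_apply_apply]
    · intro x hx
      rw [happ]
      have e1 : pr x = 0 :=
        Submodule.linearProjOfIsCompl_apply_right (hcompl k h2).symm ⟨x, hx⟩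
      rw [e1, map_zero]
      rfl
  choose T hT using hPsiT
  classical
  set Psi' : ℤ → ℤ → (Euc n →L[ℝ] Euc n) := fun j k =>
    if h : j ≤ k ∧ k ≤ 0 then T j k h.1 h.2 else 0 with hPsi'def
  have hPsi'eq : ∀ j k (h1 : j ≤ k) (h2 : k ≤ 0), Psi' j k = T j k h1 h2 := by
    intro j k h1 h2
    exact dif_pos ⟨h1, h2⟩
  have hTuniq : ∀ j k (h1 : j ≤ k) (h2 : k ≤ 0), ∀ y ∈ U k, ∀ z ∈ U j,
      Phi A k j z = y → T j k h1 h2 y = z := by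
    intro j k h1 h2 y hy z hz hzy
    have hTy : T j k h1 h2 y ∈ U j := (hT j k h1 h2).1 y
    have hTy2 : Phi A k j (T j k h1 h2 y) = y := (hT j k h1 h2).2.1 y hy
    exact INJ j k h1 h2 hTy hz (by rw [hTy2, hzy])
  have hTcomp : ∀ j k (hjm : j ≤ m) (hmk : m ≤ k) (h2 : k ≤ 0), ∀ y ∈ U k,
      T j k (hjm.trans hmk) h2 y = T j m hjm hm.le (T m k hmk h2 y) := by
    intro j k hjm hmk h2 y hy
    have hz1 : T m k hmk h2 y ∈ U m := (hT m k hmk h2).1 y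
    have hz : T j m hjm hm.le (T m k hmk h2 y) ∈ U j := (hT j m hjm hm.le).1 _
    apply hTuniq j k (hjm.trans hmk) h2 y hy _ hz
    have e2 : Phi A m j (T j m hjm hm.le (T m k hmk h2 y)) = T m k hmk h2 y :=
      (hT j m hjm hm.le).2.1 _ hz1
    have e3 : Phi A k m (T m k hmk h2 y) = y := (hT m k hmk h2).2.1 y hy
    calc Phi A k j (T j m hjm hm.le (T m k hmk h2 y))
        = Phi A k m (Phi A m j (T j m hjm hm.le (T m k hmk h2 y))) := by
          rw [Phi_comp A hjm hmk]; rfl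
      _ = y := by rw [e2, e3]
  have hTpsi : ∀ j k (h1 : j ≤ k) (hkm : k ≤ m), ∀ y ∈ U k,
      T j k h1 (by omega) y = Ψ j k y := by
    intro j k h1 hkm y hy
    obtain ⟨l1, l2, l3⟩ := hΨ j (memJ (h1.trans hkm)) k (memJ hkm) h1
    have hyk : y ∈ LinearMap.ker (P k : Euc n →ₗ[ℝ] Euc n) := by rw [← hUle k hkm]; exact hy
    obtain ⟨hz1, hz2⟩ := l2 y hyk
    exact hTuniq j k h1 (by omega) y hy (Ψ j k y)
      (by rw [hUle j (h1.trans hkm)]; exact hz1) hz2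
  obtain ⟨M3, hM30, hM3⟩ := exists_bound1 (fun k => ‖Psi' m k ∘L (1 - Q k)‖) m
  obtain ⟨M4, hM40, hM4⟩ := exists_bound2 (fun j k => ‖Psi' j k ∘L (1 - Q k)‖) m
  set CB := K * (1 + C1) + K * M3 * E + M4 * E with hCBdef
  have haux3 : 0 ≤ K * (1 + C1) := mul_nonneg hK0.le (by linarith)
  have haux4 : 0 ≤ K * M3 * E := mul_nonneg (mul_nonneg hK0.le hM30) hE0.le
  have haux5 : 0 ≤ M4 * E := mul_nonneg hM40 hE0.le
  have hCB0 : 0 ≤ CB := by rw [hCBdef]; linarith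
  have BB : ∀ j k, j ≤ k → k ≤ 0 → ∀ x : Euc n,
      ‖Psi' j k ((1 - Q k) x)‖ ≤ CB * Real.exp (-α * ((k:ℝ) - (j:ℝ))) * ‖x‖ := by
    intro j k h1 h2 x
    have hEx0 : (0:ℝ) < Real.exp (-α * ((k:ℝ) - (j:ℝ))) := Real.exp_pos _
    have hyU : (1 - Q k) x ∈ U k := by
      have h3 : (1 - Q k) x = x - Q k x := by
        simp [ContinuousLinearMap.sub_apply]
      rw [h3]; exact hQsub k h2 x
    by_cases hkm : k ≤ m
    · -- j ≤ k ≤ m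
      have hyker : (1 - Q k) x ∈ LinearMap.ker (P k : Euc n →ₗ[ℝ] Euc n) := by
        rw [← hUle k hkm]; exact hyU
      obtain ⟨l1, l2, l3⟩ := hΨ j (memJ (h1.trans hkm)) k (memJ hkm) h1
      have e1 : Psi' j k ((1 - Q k) x) = Ψ j k ((1 - Q k) x) := by
        rw [hPsi'eq j k h1 h2]
        exact hTpsi j k h1 hkm _ hyU
      have e2 : (1 - P k) ((1 - Q k) x) = (1 - Q k) x :=
        one_sub_apply_of_ker _ _ (LinearMap.mem_ker.mp hyker)
      have hynorm : ‖(1 - Q k) x‖ ≤ (1 + C1) * ‖x‖ := by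
        have h3 : (1 - Q k) x = x - Q k x := by
          simp [ContinuousLinearMap.sub_apply]
        rw [h3]
        calc ‖x - Q k x‖ ≤ ‖x‖ + ‖Q k x‖ := norm_sub_le _ _
          _ ≤ 1 * ‖x‖ + C1 * ‖x‖ := by
              rw [one_mul]; exact add_le_add le_rfl (hQnorm1 k hkm x)
          _ = (1 + C1) * ‖x‖ := by ring
      calc ‖Psi' j k ((1 - Q k) x)‖ = ‖(Ψ j k ∘L (1 - P k)) ((1 - Q k) x)‖ := by
            rw [e1, ContinuousLinearMap.comp_apply, e2]
        _ ≤ ‖Ψ j k ∘L (1 - P k)‖ * ‖(1 - Q k) x‖ := ContinuousLinearMap.le_opNorm _ _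
        _ ≤ (K * Real.exp (-α * ((k:ℝ) - (j:ℝ)))) * ((1 + C1) * ‖x‖) :=
            mul_le_mul l3 hynorm (norm_nonneg _) (by positivity)
        _ = (K * (1 + C1)) * Real.exp (-α * ((k:ℝ) - (j:ℝ))) * ‖x‖ := by ring
        _ ≤ CB * Real.exp (-α * ((k:ℝ) - (j:ℝ))) * ‖x‖ := by
            apply mul_le_mul_of_nonneg_right _ (norm_nonneg x)
            apply mul_le_mul_of_nonneg_right _ hEx0.le
            rw [hCBdef]; linarith
    · push_neg at hkm
      by_cases hjm : j ≤ m
      · -- j ≤ m < k ≤ 0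
        have hmk : m ≤ k := by omega
        have e1 : Psi' j k ((1 - Q k) x)
            = T j m hjm hm.le (T m k hmk h2 ((1 - Q k) x)) := by
          rw [hPsi'eq j k h1 h2]
          have h6 := hTcomp j k hjm hmk h2 _ hyU
          exact h6
        have hz1 : T m k hmk h2 ((1 - Q k) x) ∈ U m := (hT m k hmk h2).1 _
        have hz1ker : T m k hmk h2 ((1 - Q k) x) ∈ LinearMap.ker (P m : Euc n →ₗ[ℝ] Euc n) := by
          rw [← hUm]; exact hz1
        have e2 : T j m hjm hm.le (T m k hmk h2 ((1 - Q k) x))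
            = Ψ j m (T m k hmk h2 ((1 - Q k) x)) :=
          hTpsi j m hjm le_rfl _ hz1
        obtain ⟨l1, l2, l3⟩ := hΨ j (memJ hjm) m (memJ le_rfl) hjm
        have e3 : (1 - P m) (T m k hmk h2 ((1 - Q k) x)) = T m k hmk h2 ((1 - Q k) x) :=
          one_sub_apply_of_ker _ _ (LinearMap.mem_ker.mp hz1ker)
        have hTnorm : ‖T m k hmk h2 ((1 - Q k) x)‖ ≤ M3 * ‖x‖ := by
          have e4 : T m k hmk h2 ((1 - Q k) x) = (Psi' m k ∘L (1 - Q k)) x := by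
            rw [ContinuousLinearMap.comp_apply, hPsi'eq m k hmk h2]
          rw [e4]
          calc ‖(Psi' m k ∘L (1 - Q k)) x‖ ≤ ‖Psi' m k ∘L (1 - Q k)‖ * ‖x‖ :=
                ContinuousLinearMap.le_opNorm _ _
            _ ≤ M3 * ‖x‖ := mul_le_mul_of_nonneg_right
                (hM3 k (by omega) h2) (norm_nonneg x)
        have hexpe : Real.exp (-α * ((m:ℝ) - (j:ℝ)))
            ≤ E * Real.exp (-α * ((k:ℝ) - (j:ℝ))) := by
          rw [hEdef, ← Real.exp_add]
          apply Real.exp_le_exp.mpr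
          have hk' : (k:ℝ) ≤ 0 := by exact_mod_cast h2
          nlinarith [mul_nonneg hα.le (neg_nonneg.mpr hk')]
        calc ‖Psi' j k ((1 - Q k) x)‖
            = ‖(Ψ j m ∘L (1 - P m)) (T m k hmk h2 ((1 - Q k) x))‖ := by
              rw [e1, e2, ContinuousLinearMap.comp_apply, e3]
          _ ≤ ‖Ψ j m ∘L (1 - P m)‖ * ‖T m k hmk h2 ((1 - Q k) x)‖ :=
              ContinuousLinearMap.le_opNorm _ _
          _ ≤ (K * Real.exp (-α * ((m:ℝ) - (j:ℝ)))) * (M3 * ‖x‖) :=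
              mul_le_mul l3 hTnorm (norm_nonneg _) (by positivity)
          _ ≤ (K * (E * Real.exp (-α * ((k:ℝ) - (j:ℝ))))) * (M3 * ‖x‖) := by
              apply mul_le_mul_of_nonneg_right _ (by positivity)
              exact mul_le_mul_of_nonneg_left hexpe hK0.le
          _ = (K * M3 * E) * Real.exp (-α * ((k:ℝ) - (j:ℝ))) * ‖x‖ := by ring
          _ ≤ CB * Real.exp (-α * ((k:ℝ) - (j:ℝ))) * ‖x‖ := by
              apply mul_le_mul_of_nonneg_right _ (norm_nonneg x)
              apply mul_le_mul_of_nonneg_right _ hEx0.le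
              rw [hCBdef]; linarith
      · push_neg at hjm
        have h4 : ‖Psi' j k ((1 - Q k) x)‖ ≤ M4 * ‖x‖ := by
          have e4 : Psi' j k ((1 - Q k) x) = (Psi' j k ∘L (1 - Q k)) x := rfl
          rw [e4]
          calc ‖(Psi' j k ∘L (1 - Q k)) x‖ ≤ ‖Psi' j k ∘L (1 - Q k)‖ * ‖x‖ :=
                ContinuousLinearMap.le_opNorm _ _
            _ ≤ M4 * ‖x‖ := mul_le_mul_of_nonneg_right
                (hM4 j k (by omega) (by omega) (by omega) h2) (norm_nonneg x)
        have hone : (1:ℝ) ≤ E * Real.exp (-α * ((k:ℝ) - (j:ℝ))) := by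
          rw [hEdef, ← Real.exp_add, show (1:ℝ) = Real.exp 0 from (Real.exp_zero).symm]
          apply Real.exp_le_exp.mpr
          have h5 : (k:ℝ) - (j:ℝ) ≤ -(m:ℝ) := by
            have h6 : k - j ≤ -m := by omega
            exact_mod_cast h6
          nlinarith [mul_nonneg hα.le (by linarith : (0:ℝ) ≤ -(m:ℝ) - ((k:ℝ) - (j:ℝ)))]
        calc ‖Psi' j k ((1 - Q k) x)‖ ≤ M4 * ‖x‖ := h4
          _ = M4 * ‖x‖ * 1 := by ring
          _ ≤ M4 * ‖x‖ * (E * Real.exp (-α * ((k:ℝ) - (j:ℝ)))) := by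
              apply mul_le_mul_of_nonneg_left hone
              exact mul_nonneg hM40 (norm_nonneg x)
          _ = (M4 * E) * Real.exp (-α * ((k:ℝ) - (j:ℝ))) * ‖x‖ := by ring
          _ ≤ CB * Real.exp (-α * ((k:ℝ) - (j:ℝ))) * ‖x‖ := by
              apply mul_le_mul_of_nonneg_right _ (norm_nonneg x)
              apply mul_le_mul_of_nonneg_right _ hEx0.le
              rw [hCBdef]; linarith
  -- final assembly
  set Kf := 1 + CF + CB with hKfdef
  have hKf1 : (1:ℝ) ≤ Kf := by rw [hKfdef]; linarith
  have hCFKf : CF ≤ Kf := by rw [hKfdef]; linarith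
  have hCBKf : CB ≤ Kf := by rw [hKfdef]; linarith
  refine ⟨Q, Kf, α, ?_, ?_⟩
  · refine ⟨hKf1, hα, ?_, ?_, ?_, ?_, ?_, ?_⟩
    · intro k hk
      exact hQproj k hk
    · intro k hk j hj
      rw [hQrangeS k hk, hQrangeS j hj, hdimS k hk, hdimS j hj]
    · intro j hj k hk h1
      exact hQinv j k h1 hk
    · intro j hj k hk h1
      apply ContinuousLinearMap.opNorm_le_bound
      · exact mul_nonneg (by linarith) (Real.exp_pos _).le
      · intro x
        refine le_trans (FB j k h1 hk x) ?_
        apply mul_le_mul_of_nonneg_right _ (norm_nonneg x)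
        exact mul_le_mul_of_nonneg_right hCFKf (Real.exp_pos _).le
    · intro k hk hk1
      have hkU := hQkerU k (le_of_lt (lt_of_lt_of_le (by omega : k < k + 1) hk1))
      have hk1U := hQkerU (k+1) hk1
      rw [hkU, hk1U]
      refine ⟨?_, ?_, ?_⟩
      · intro x hx
        have h3 := hmapsto k (k+1) (by omega) hk1 x hx
        rwa [Phi_succ_self] at h3
      · intro x hx y hy hxy
        apply INJ k (k+1) (by omega) hk1 hx hy
        have e := Phi_succ_self A k
        calc Phi A (k+1) k x = A k x := by rw [e]
          _ = A k y := hxy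
          _ = Phi A (k+1) k y := by rw [e]
      · intro y hy
        have h3 : (y : Euc n) ∈ Submodule.map (Phi A (k+1) k : Euc n →ₗ[ℝ] Euc n) (U k) := by
          rw [MAPEQ k (k+1) (by omega) hk1]; exact hy
        obtain ⟨x, hx, hxy⟩ := Submodule.mem_map.mp h3
        refine ⟨x, hx, ?_⟩
        rw [← Phi_succ_self A k]
        exact hxy
    · refine ⟨Psi', ?_⟩
      intro j hj k hk h1
      have hk0 : k ≤ 0 := hk
      have hj0 : j ≤ 0 := hj
      refine ⟨?_, ?_, ?_⟩
      · intro x hx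
        rw [hQkerU j hj0] at hx
        rw [hPsi'eq j k h1 hk0]
        exact (hT j k h1 hk0).2.2.1 x hx
      · intro x hx
        rw [hQkerU k hk0] at hx
        rw [hPsi'eq j k h1 hk0]
        constructor
        · rw [hQkerU j hj0]
          exact (hT j k h1 hk0).1 x
        · exact (hT j k h1 hk0).2.1 x hx
      · apply ContinuousLinearMap.opNorm_le_bound
        · exact mul_nonneg (by linarith) (Real.exp_pos _).le
        · intro x
          have h4 : (Psi' j k ∘L (1 - Q k)) x = Psi' j k ((1 - Q k) x) := rfl
          rw [h4]
          refine le_trans (BB j k h1 hk0 x) ?_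
          apply mul_le_mul_of_nonneg_right _ (norm_nonneg x)
          exact mul_le_mul_of_nonneg_right hCBKf (Real.exp_pos _).le
  · rw [hQrangeS 0 le_rfl]
    exact hdimS 0 le_rfl

theorem fwd_dir {n : ℕ} (A P : ℤ → (Euc n →L[ℝ] Euc n)) (K α : ℝ)
    (m : ℤ) (hm : m < 0) (r : ℕ)
    (hED : ExpDichotomyOn A {k : ℤ | k ≤ m} P K α)
    (Q : ℤ → (Euc n →L[ℝ] Euc n)) (K' α' : ℝ)
    (hQ : ExpDichotomyOn A {k : ℤ | k ≤ 0} Q K' α') :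
    Set.InjOn (Phi A 0 m) (LinearMap.ker (P m : Euc n →ₗ[ℝ] Euc n) : Set (Euc n)) := by
  obtain ⟨Ψ, hΨ⟩ := hED.backward
  have hmJ : m ∈ {k : ℤ | k ≤ m} := Set.mem_setOf_eq ▸ le_rfl
  have hmJ2 : m ∈ {k : ℤ | k ≤ 0} := Set.mem_setOf_eq ▸ hm.le
  have h0J2 : (0:ℤ) ∈ {k : ℤ | k ≤ 0} := Set.mem_setOf_eq ▸ le_rfl
  have hQnorm : ∀ j : ℤ, j ≤ 0 → ‖Q j‖ ≤ K' := by
    intro j hj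
    have h := hQ.forward j hj j hj le_rfl
    rw [Phi_of_le A le_rfl] at h
    have h1 : (1 : Euc n →L[ℝ] Euc n) ∘L Q j = Q j := by ext y; simp
    rw [h1] at h
    simpa using h
  have hK0 : (0:ℝ) < K := lt_of_lt_of_le one_pos hED.one_le_K
  have hK'0 : (0:ℝ) < K' := lt_of_lt_of_le one_pos hQ.one_le_K
  -- Step A : ker P m ⊆ ker Q m
  have hker : ∀ x ∈ (LinearMap.ker (P m : Euc n →ₗ[ℝ] Euc n) : Set (Euc n)), Q m x = 0 := by
    intro x hx
    have key : ∀ N : ℕ, ‖Q m x‖ ≤ (K' * (K' * K) * ‖x‖) * Real.exp (-(α + α') * N) := by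
      intro N
      set j : ℤ := m - N with hjdef
      have hjm : j ≤ m := by omega
      have hjJ : j ∈ {k : ℤ | k ≤ m} := Set.mem_setOf_eq ▸ hjm
      have hjJ2 : j ∈ {k : ℤ | k ≤ 0} := by
        simp only [Set.mem_setOf_eq]; omega
      obtain ⟨hΨ1, hΨ2, hΨ3⟩ := hΨ j hjJ m hmJ hjm
      set y := Ψ j m x with hy
      obtain ⟨hy1, hy2⟩ := hΨ2 x hx
      have hmj : (m:ℝ) - (j:ℝ) = (N:ℝ) := by
        push_cast [hjdef]; ring
      have hynorm : ‖y‖ ≤ K * Real.exp (-α * N) * ‖x‖ := by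
        have hxk : P m x = 0 := hx
        have h1 : (1 - P m) x = x := by
          simp [ContinuousLinearMap.sub_apply, hxk]
        calc ‖y‖ = ‖(Ψ j m ∘L (1 - P m)) x‖ := by
              rw [ContinuousLinearMap.comp_apply, h1]
          _ ≤ ‖Ψ j m ∘L (1 - P m)‖ * ‖x‖ := ContinuousLinearMap.le_opNorm _ _
          _ ≤ K * Real.exp (-α * N) * ‖x‖ := by
              apply mul_le_mul_of_nonneg_right _ (norm_nonneg x)
              rw [← hmj]; exact hΨ3
      have hinv := hQ.invariance j hjJ2 m hmJ2 hjm
      have hQm : Q m x = Phi A m j (Q j y) := by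
        have h2 := congrArg (fun T : Euc n →L[ℝ] Euc n => T y) hinv
        simp only [ContinuousLinearMap.comp_apply] at h2
        rw [← hy2]; exact h2.symm
      have hproj := hQ.proj j hjJ2
      have hQQ : Q j (Q j y) = Q j y :=
        congrArg (fun T : Euc n →L[ℝ] Euc n => T y) hproj
      have hQm2 : ‖Q m x‖ ≤ K' * Real.exp (-α' * N) * (K' * (K * Real.exp (-α * N) * ‖x‖)) := by
        rw [hQm, ← hQQ]
        calc ‖Phi A m j (Q j (Q j y))‖ = ‖(Phi A m j ∘L Q j) (Q j y)‖ := rfl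
          _ ≤ ‖Phi A m j ∘L Q j‖ * ‖Q j y‖ := ContinuousLinearMap.le_opNorm _ _
          _ ≤ (K' * Real.exp (-α' * N)) * (K' * ‖y‖) := by
              apply mul_le_mul
              · have := hQ.forward j hjJ2 m hmJ2 hjm
                rwa [hmj] at this
              · calc ‖Q j y‖ ≤ ‖Q j‖ * ‖y‖ := ContinuousLinearMap.le_opNorm _ _
                  _ ≤ K' * ‖y‖ := mul_le_mul_of_nonneg_right (hQnorm j hjJ2) (norm_nonneg _)
              · exact norm_nonneg _
              · positivity
          _ ≤ K' * Real.exp (-α' * N) * (K' * (K * Real.exp (-α * N) * ‖x‖)) := by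
              apply mul_le_mul_of_nonneg_left _ (by positivity)
              exact mul_le_mul_of_nonneg_left hynorm hK'0.le
      calc ‖Q m x‖ ≤ K' * Real.exp (-α' * N) * (K' * (K * Real.exp (-α * N) * ‖x‖)) := hQm2
        _ = (K' * (K' * K) * ‖x‖) * (Real.exp (-α' * N) * Real.exp (-α * N)) := by ring
        _ = (K' * (K' * K) * ‖x‖) * Real.exp (-(α + α') * N) := by
            rw [← Real.exp_add]; ring_nf
    have hβ : 0 < α + α' := add_pos hED.alpha_pos hQ.alpha_pos
    have hlim : Filter.Tendsto
        (fun N : ℕ => (K' * (K' * K) * ‖x‖) * Real.exp (-(α + α') * N))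
        Filter.atTop (nhds 0) := by
      have h1 : (fun N : ℕ => (K' * (K' * K) * ‖x‖) * Real.exp (-(α + α') * N))
          = fun N : ℕ => (K' * (K' * K) * ‖x‖) * (Real.exp (-(α + α')))^N := by
        funext N
        rw [← Real.exp_nat_mul]
        ring_nf
      rw [h1]
      have h2 : |Real.exp (-(α + α'))| < 1 := by
        rw [abs_of_pos (Real.exp_pos _)]
        rw [Real.exp_lt_one_iff]
        linarith
      simpa using (tendsto_pow_atTop_nhds_zero_of_abs_lt_one h2).const_mul
        (K' * (K' * K) * ‖x‖)
    have hle : ‖Q m x‖ ≤ 0 := ge_of_tendsto' hlim key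
    exact norm_le_zero_iff.mp hle
  -- Step B
  intro x hx y hy hxy
  obtain ⟨Ψq, hΨq⟩ := hQ.backward
  obtain ⟨h1, _, _⟩ := hΨq m hmJ2 0 h0J2 hm.le
  have hxq : x ∈ LinearMap.ker (Q m : Euc n →ₗ[ℝ] Euc n) := hker x hx
  have hyq : y ∈ LinearMap.ker (Q m : Euc n →ₗ[ℝ] Euc n) := hker y hy
  calc x = Ψq m 0 (Phi A 0 m x) := (h1 x hxq).symm
    _ = Ψq m 0 (Phi A 0 m y) := by rw [hxy]
    _ = y := h1 y hyq

/-- for `m < 0`, suppose the equation has an exponential dichotomy on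
`(-∞, m]` with projection `P` of rank `r`. Then the equation has an exponential
dichotomy on `(-∞, 0]` with a projection of rank `r` if and only if `Φ(0,m)` is
one-to-one on `N(P(m))`. -/
theorem statement13 {n : ℕ} (A P : ℤ → (Euc n →L[ℝ] Euc n)) (K α : ℝ)
    (m : ℤ) (hm : m < 0) (r : ℕ)
    (hED : ExpDichotomyOn A {k : ℤ | k ≤ m} P K α)
    (hrank : Module.finrank ℝ (LinearMap.range (P m : Euc n →ₗ[ℝ] Euc n)) = r) :
    (∃ (Q : ℤ → (Euc n →L[ℝ] Euc n)) (K' α' : ℝ),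
        ExpDichotomyOn A {k : ℤ | k ≤ 0} Q K' α' ∧
        Module.finrank ℝ (LinearMap.range (Q 0 : Euc n →ₗ[ℝ] Euc n)) = r) ↔
    Set.InjOn (Phi A 0 m) (LinearMap.ker (P m : Euc n →ₗ[ℝ] Euc n) : Set (Euc n)) := by
  constructor
  · rintro ⟨Q, K', α', hQ, hQr⟩
    exact fwd_dir A P K α m hm r hED Q K' α' hQ
  · intro hinj
    exact bwd_dir A P K α m hm r hED hrank hinj
end
end

section
/- For m < 0, suppose the equation x(k+1) = A(k)x(k) has an exponential dichotomy on (−∞, m] with projection P(k) of rank r. Then the equation has an exponential dichotomy on (−∞, 0] with a projection family Q(k) satisfying Q(k) = P(k) for all k ≤ m if and only if both of the following hold: Φ(0,m) = A(−1)···A(m) is one-to-one on N(P(m)), and the nullspace N(Φ(0,m)) is contained in R(P(m)). -/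
noncomputable section

open scoped BigOperators

namespace St14


variable {n : ℕ}

theorem Phi_eq (A : ℤ → (Euc n →L[ℝ] Euc n)) (k m : ℤ) :
    Phi A k m = (((List.range (k - m).toNat).map fun i : ℕ => A (m + (i:ℤ))).reverse).prod := by
  unfold Phi
  simp only [List.pure_def, List.bind_eq_flatMap]
  congr 2
  induction (List.range (k - m).toNat) with
  | nil => rfl
  | cons a l ih => simp [ih]

theorem Phi_of_le (A : ℤ → (Euc n →L[ℝ] Euc n)) {k m : ℤ} (h : k ≤ m) : Phi A k m = 1 := by
  rw [Phi_eq, Int.toNat_of_nonpos (by omega)]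
  simp

theorem Phi_self (A : ℤ → (Euc n →L[ℝ] Euc n)) (k : ℤ) : Phi A k k = 1 := Phi_of_le A le_rfl

theorem Phi_succ (A : ℤ → (Euc n →L[ℝ] Euc n)) {k m : ℤ} (h : m ≤ k) :
    Phi A (k+1) m = A k ∘L Phi A k m := by
  rw [Phi_eq, Phi_eq]
  have h1 : (k + 1 - m).toNat = (k - m).toNat + 1 := by omega
  have h2 : m + ((k - m).toNat : ℤ) = k := by omega
  rw [h1, List.range_succ]
  simp only [List.map_append, List.reverse_append, List.prod_append, List.map_cons,
    List.map_nil, List.reverse_cons, List.reverse_nil, List.nil_append, List.prod_cons,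
    List.prod_nil, mul_one, h2]
  rfl

theorem Phi_comp (A : ℤ → (Euc n →L[ℝ] Euc n)) {j l k : ℤ} (hjl : j ≤ l) (hlk : l ≤ k) :
    Phi A k j = Phi A k l ∘L Phi A l j := by
  refine Int.le_induction (motive := fun k _ => Phi A k j = Phi A k l ∘L Phi A l j) ?_ ?_ k hlk
  · show Phi A l j = Phi A l l ∘L Phi A l j
    rw [Phi_self, ContinuousLinearMap.one_def, ContinuousLinearMap.id_comp]
  · intro k hk ih
    rw [Phi_succ A (le_trans hjl hk), Phi_succ A hk, ih]
    rfl

theorem Phi_comp_apply (A : ℤ → (Euc n →L[ℝ] Euc n)) {j l k : ℤ} (hjl : j ≤ l) (hlk : l ≤ k)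
    (x : Euc n) : Phi A k j x = Phi A k l (Phi A l j x) := by
  rw [Phi_comp A hjl hlk]; rfl

theorem exists_bound {ι : Type*} {s : Set ι} (hs : s.Finite) (f : ι → ℝ) :
    ∃ C : ℝ, 0 ≤ C ∧ ∀ x ∈ s, f x ≤ C := by
  obtain ⟨C, hC⟩ := (hs.image f).bddAbove
  exact ⟨max C 0, le_max_right _ _, fun x hx => le_trans (hC ⟨x, hx, rfl⟩) (le_max_left _ _)⟩

open Classical in
/-- Projection onto `R` along `U` (zero junk value if they are not complementary). -/
def projCLM (R U : Submodule ℝ (Euc n)) : Euc n →L[ℝ] Euc n :=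
  if h : IsCompl R U then
    LinearMap.toContinuousLinearMap (R.subtype ∘ₗ Submodule.projectionOnto R U h)
  else 0

variable {R U : Submodule ℝ (Euc n)}

theorem projCLM_apply (h : IsCompl R U) (x : Euc n) :
    projCLM R U x = (Submodule.projectionOnto R U h x : Euc n) := by
  rw [projCLM, dif_pos h]
  simp

theorem projCLM_mem (h : IsCompl R U) (x : Euc n) : projCLM R U x ∈ R := by
  rw [projCLM_apply h]; exact Submodule.coe_mem _

theorem projCLM_left (h : IsCompl R U) {x : Euc n} (hx : x ∈ R) : projCLM R U x = x := by
  rw [projCLM_apply h]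
  exact congrArg _ (Submodule.projectionOnto_apply_left h ⟨x, hx⟩)

theorem projCLM_right (h : IsCompl R U) {x : Euc n} (hx : x ∈ U) : projCLM R U x = 0 := by
  rw [projCLM_apply h, Submodule.projectionOnto_apply_of_mem_right h hx]
  rfl

theorem projCLM_idem (h : IsCompl R U) : projCLM R U ∘L projCLM R U = projCLM R U := by
  refine ContinuousLinearMap.ext fun x => ?_
  exact projCLM_left h (projCLM_mem h x)

theorem projCLM_ker (h : IsCompl R U) : LinearMap.ker (projCLM R U : Euc n →ₗ[ℝ] Euc n) = U := by
  ext x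
  simp only [LinearMap.mem_ker, ContinuousLinearMap.coe_coe]
  constructor
  · intro hx
    have := projCLM_apply h x
    rw [hx] at this
    have h0 : Submodule.projectionOnto R U h x = 0 := by
      apply Subtype.ext; exact this.symm
    exact (Submodule.projectionOnto_apply_eq_zero_iff h).1 h0
  · intro hx; exact projCLM_right h hx

theorem projCLM_range (h : IsCompl R U) : LinearMap.range (projCLM R U : Euc n →ₗ[ℝ] Euc n) = R := by
  apply le_antisymm
  · rintro x ⟨y, rfl⟩
    exact projCLM_mem h y
  · intro x hx
    exact ⟨x, projCLM_left h hx⟩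

theorem isCompl_range_ker_of_proj {Pm : Euc n →L[ℝ] Euc n} (h : Pm ∘L Pm = Pm) :
    IsCompl (LinearMap.range (Pm : Euc n →ₗ[ℝ] Euc n)) (LinearMap.ker (Pm : Euc n →ₗ[ℝ] Euc n)) := by
  have hmem : ∀ c : Euc n, (Pm : Euc n →ₗ[ℝ] Euc n) c ∈ LinearMap.range (Pm : Euc n →ₗ[ℝ] Euc n) := by
    intro c; exact ⟨c, rfl⟩
  set f : Euc n →ₗ[ℝ] LinearMap.range (Pm : Euc n →ₗ[ℝ] Euc n) :=
    LinearMap.codRestrict (LinearMap.range (Pm : Euc n →ₗ[ℝ] Euc n)) (Pm : Euc n →ₗ[ℝ] Euc n) hmem with hf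
  have hfx : ∀ x : LinearMap.range (Pm : Euc n →ₗ[ℝ] Euc n), f x = x := by
    rintro ⟨x, y, rfl⟩
    apply Subtype.ext
    exact DFunLike.congr_fun h y
  have hc := LinearMap.isCompl_of_proj hfx
  have hker : LinearMap.ker f = LinearMap.ker (Pm : Euc n →ₗ[ℝ] Euc n) := by
    rw [hf, LinearMap.ker_codRestrict]
  rwa [hker] at hc

theorem comm_of_proj {f Qj Qk : Euc n →L[ℝ] Euc n}
    (h1 : ∀ x, Qk (f (Qj x)) = f (Qj x))
    (h2 : ∀ x, Qk (f (x - Qj x)) = 0) : f ∘L Qj = Qk ∘L f := by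
  refine ContinuousLinearMap.ext fun x => ?_
  simp only [ContinuousLinearMap.comp_apply]
  have e1 : f x = f (Qj x) + f (x - Qj x) := by
    rw [← map_add]; congr 1; abel
  rw [e1, map_add, h1, h2, add_zero]


section Construction

variable (A P : ℤ → (Euc n →L[ℝ] Euc n)) (m : ℤ)

def Uk (i : ℕ) : Submodule ℝ (Euc n) :=
  (LinearMap.ker (P m : Euc n →ₗ[ℝ] Euc n)).map (Phi A (m + i) m : Euc n →ₗ[ℝ] Euc n)

open Classical in
def Rk : ℕ → Submodule ℝ (Euc n) := fun i =>
  Nat.rec (LinearMap.range (P m : Euc n →ₗ[ℝ] Euc n))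
    (fun i R =>
      if h : ∃ R' : Submodule ℝ (Euc n),
          (IsCompl R' (Uk A P m (i + 1)) ∧
            LinearMap.ker (Phi A 0 (m + ((i + 1 : ℕ) : ℤ)) : Euc n →ₗ[ℝ] Euc n) ≤ R') ∧
          Submodule.map (A (m + i) : Euc n →ₗ[ℝ] Euc n) R ≤ R'
        then h.choose else ⊥) i

theorem Rk_zero : Rk A P m 0 = LinearMap.range (P m : Euc n →ₗ[ℝ] Euc n) := rfl

open Classical in
theorem Rk_succ (i : ℕ) : Rk A P m (i + 1) =
    (if h : ∃ R' : Submodule ℝ (Euc n),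
          (IsCompl R' (Uk A P m (i + 1)) ∧
            LinearMap.ker (Phi A 0 (m + ((i + 1 : ℕ) : ℤ)) : Euc n →ₗ[ℝ] Euc n) ≤ R') ∧
          Submodule.map (A (m + i) : Euc n →ₗ[ℝ] Euc n) (Rk A P m i) ≤ R'
        then h.choose else ⊥) := rfl

theorem Uk_zero : Uk A P m 0 = LinearMap.ker (P m : Euc n →ₗ[ℝ] Euc n) := by
  unfold Uk
  have h : (m + ((0 : ℕ) : ℤ)) = m := by simp
  rw [h, Phi_self]
  ext x
  simp only [Submodule.mem_map]
  constructor
  · rintro ⟨y, hy, rfl⟩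
    simpa using hy
  · intro hx
    exact ⟨x, hx, rfl⟩

theorem Uk_eq {k : ℤ} (hk : m ≤ k) :
    Uk A P m (k - m).toNat = (LinearMap.ker (P m : Euc n →ₗ[ℝ] Euc n)).map (Phi A k m : Euc n →ₗ[ℝ] Euc n) := by
  unfold Uk
  rw [show m + (((k - m).toNat : ℕ) : ℤ) = k by omega]

theorem exists_next (i : ℕ) (hi : m + i + 1 ≤ 0) {R : Submodule ℝ (Euc n)}
    (hC : IsCompl R (Uk A P m i)) (hK : LinearMap.ker (Phi A 0 (m + i) : Euc n →ₗ[ℝ] Euc n) ≤ R) :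
    ∃ R' : Submodule ℝ (Euc n),
      (IsCompl R' (Uk A P m (i + 1)) ∧
        LinearMap.ker (Phi A 0 (m + ((i + 1 : ℕ) : ℤ)) : Euc n →ₗ[ℝ] Euc n) ≤ R') ∧
      Submodule.map (A (m + i) : Euc n →ₗ[ℝ] Euc n) R ≤ R' := by
  have hcast : (m + ((i + 1 : ℕ) : ℤ)) = m + i + 1 := by push_cast; ring
  set X := Submodule.map (A (m + i) : Euc n →ₗ[ℝ] Euc n) R ⊔ LinearMap.ker (Phi A 0 (m + ((i + 1 : ℕ) : ℤ)) : Euc n →ₗ[ℝ] Euc n)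
    with hX
  have hstep : Phi A (m + ((i + 1 : ℕ) : ℤ)) m = A (m + i) ∘L Phi A (m + i) m := by
    rw [hcast]
    exact Phi_succ A (by omega)
  have hXU : ∀ y, y ∈ X → y ∈ Uk A P m (i + 1) → y = 0 := by
    intro y hyX hyU
    obtain ⟨a, haX, z, hz, hsum⟩ := Submodule.mem_sup.1 hyX
    obtain ⟨x, hxR, hax⟩ := Submodule.mem_map.1 haX
    obtain ⟨u, hu, huy⟩ := Submodule.mem_map.1 hyU
    set w : Euc n := Phi A (m + i) m u with hw
    have hyw : y = A (m + i) w := by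
      rw [← huy, hstep]; rfl
    have hzker : Phi A 0 (m + ((i + 1 : ℕ) : ℤ)) z = 0 := hz
    have hAxw : A (m + i) (x - w) = -z := by
      have h1 : A (m + i) x = y - z := by rw [← hsum, ← ContinuousLinearMap.coe_coe, hax]; abel
      rw [map_sub, h1, ← hyw]; abel
    have hker0 : x - w ∈ LinearMap.ker (Phi A 0 (m + i) : Euc n →ₗ[ℝ] Euc n) := by
      have hcomp : Phi A 0 (m + i) = Phi A 0 (m + i + 1) ∘L A (m + i) := by
        have h2 : Phi A (m + i + 1) (m + i) = A (m + i) := by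
          rw [Phi_succ A (le_refl (m + i)), Phi_self]
          exact ContinuousLinearMap.comp_id _
        rw [← h2]
        exact Phi_comp A (by omega) (by omega)
      rw [LinearMap.mem_ker, ContinuousLinearMap.coe_coe]
      have : Phi A 0 (m + i) (x - w) = Phi A 0 (m + i + 1) (A (m + i) (x - w)) := by
        rw [hcomp]; rfl
      rw [this, hAxw, map_neg, ← hcast, hzker, neg_zero]
    have hwR : w ∈ R := by
      have hxw : x - w ∈ R := hK hker0
      have : w = x - (x - w) := by abel
      rw [this]
      exact R.sub_mem hxR hxw
    have hwU : w ∈ Uk A P m i := Submodule.mem_map.2 ⟨u, hu, rfl⟩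
    have hw0 : w = 0 := Submodule.disjoint_def.1 hC.disjoint w hwR hwU
    rw [hyw, hw0, map_zero]
  obtain ⟨W, hW⟩ := Submodule.exists_isCompl (X ⊔ Uk A P m (i + 1))
  refine ⟨X ⊔ W, ⟨⟨?_, ?_⟩, ?_⟩, ?_⟩
  · rw [Submodule.disjoint_def]
    intro y hyXW hyU
    obtain ⟨xx, hxx, w, hw, hsum⟩ := Submodule.mem_sup.1 hyXW
    have hw1 : w ∈ X ⊔ Uk A P m (i + 1) := by
      have hy' : y ∈ X ⊔ Uk A P m (i + 1) := Submodule.mem_sup_right hyU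
      have hxx' : xx ∈ X ⊔ Uk A P m (i + 1) := Submodule.mem_sup_left hxx
      have : w = y - xx := by rw [← hsum]; abel
      rw [this]
      exact Submodule.sub_mem _ hy' hxx'
    have hw0 : w = 0 := Submodule.disjoint_def.1 hW.disjoint w hw1 hw
    have hyX : y = xx := by rw [← hsum, hw0, add_zero]
    exact hXU y (hyX ▸ hxx) hyU
  · rw [codisjoint_iff]
    rw [sup_right_comm, hW.codisjoint.eq_top]
  · exact le_trans le_sup_right le_sup_left
  · exact le_trans le_sup_left le_sup_left

theorem Rk_spec (H1 : Set.InjOn (Phi A 0 m) (LinearMap.ker (P m : Euc n →ₗ[ℝ] Euc n) : Set (Euc n)))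
    (H2 : LinearMap.ker (Phi A 0 m : Euc n →ₗ[ℝ] Euc n) ≤ LinearMap.range (P m : Euc n →ₗ[ℝ] Euc n))
    (hproj : P m ∘L P m = P m) :
    ∀ i : ℕ, m + i ≤ 0 →
      (IsCompl (Rk A P m i) (Uk A P m i) ∧
        LinearMap.ker (Phi A 0 (m + i) : Euc n →ₗ[ℝ] Euc n) ≤ Rk A P m i) ∧
      (m + i + 1 ≤ 0 → Submodule.map (A (m + i) : Euc n →ₗ[ℝ] Euc n) (Rk A P m i) ≤ Rk A P m (i + 1)) := by
  have step : ∀ i : ℕ, m + i + 1 ≤ 0 →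
      (IsCompl (Rk A P m i) (Uk A P m i) ∧
        LinearMap.ker (Phi A 0 (m + i) : Euc n →ₗ[ℝ] Euc n) ≤ Rk A P m i) →
      ((IsCompl (Rk A P m (i+1)) (Uk A P m (i+1)) ∧
        LinearMap.ker (Phi A 0 (m + ((i+1 : ℕ) : ℤ)) : Euc n →ₗ[ℝ] Euc n) ≤ Rk A P m (i+1)) ∧
        Submodule.map (A (m + i) : Euc n →ₗ[ℝ] Euc n) (Rk A P m i) ≤ Rk A P m (i + 1)) := by
    intro i hi hgood
    have hex := exists_next A P m i hi hgood.1 hgood.2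
    rw [Rk_succ, dif_pos hex]
    exact ⟨hex.choose_spec.1, hex.choose_spec.2⟩
  intro i
  induction i with
  | zero =>
      intro _
      have hgood0 : IsCompl (Rk A P m 0) (Uk A P m 0) ∧
          LinearMap.ker (Phi A 0 (m + ((0:ℕ):ℤ)) : Euc n →ₗ[ℝ] Euc n) ≤ Rk A P m 0 := by
        rw [Rk_zero, Uk_zero]
        constructor
        · exact isCompl_range_ker_of_proj hproj
        · simpa using H2
      refine ⟨hgood0, fun h1 => ?_⟩
      exact (step 0 (by simpa using h1) hgood0).2
  | succ i ih =>
      intro hi1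
      have hi0 : m + i + 1 ≤ 0 := by push_cast at hi1 ⊢; omega
      have hgood := (ih (by omega)).1
      have hs := step i hi0 hgood
      refine ⟨hs.1, fun h2 => ?_⟩
      exact (step (i+1) (by push_cast at h2 ⊢; omega) hs.1).2

theorem injOn_of_le (H1 : Set.InjOn (Phi A 0 m) (LinearMap.ker (P m : Euc n →ₗ[ℝ] Euc n) : Set (Euc n)))
    {k : ℤ} (hmk : m ≤ k) (hk0 : k ≤ 0) :
    Set.InjOn (Phi A k m) (LinearMap.ker (P m : Euc n →ₗ[ℝ] Euc n) : Set (Euc n)) := by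
  intro x hx y hy hxy
  apply H1 hx hy
  rw [Phi_comp_apply A hmk hk0 x, Phi_comp_apply A hmk hk0 y, hxy]

theorem Uk_finrank (H1 : Set.InjOn (Phi A 0 m) (LinearMap.ker (P m : Euc n →ₗ[ℝ] Euc n) : Set (Euc n)))
    {k : ℤ} (hmk : m ≤ k) (hk0 : k ≤ 0) :
    Module.finrank ℝ (Uk A P m (k - m).toNat) =
      Module.finrank ℝ (LinearMap.ker (P m : Euc n →ₗ[ℝ] Euc n)) := by
  set g : (LinearMap.ker (P m : Euc n →ₗ[ℝ] Euc n) : Submodule ℝ (Euc n)) →ₗ[ℝ] Euc n :=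
    ((Phi A k m : Euc n →ₗ[ℝ] Euc n)).comp (LinearMap.ker (P m : Euc n →ₗ[ℝ] Euc n)).subtype with hg
  have hgi : Function.Injective g := by
    intro u v h
    apply Subtype.ext
    exact injOn_of_le A P m H1 hmk hk0 u.2 v.2 h
  have hfr := LinearMap.finrank_range_of_inj hgi
  have hrange : LinearMap.range g = Uk A P m (k - m).toNat := by
    rw [Uk_eq A P m hmk]
    ext x
    simp only [LinearMap.mem_range, Submodule.mem_map]
    constructor
    · rintro ⟨u, rfl⟩
      exact ⟨u.1, u.2, rfl⟩
    · rintro ⟨y, hy, rfl⟩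
      exact ⟨⟨y, hy⟩, rfl⟩
  rw [← hrange, hfr]

end Construction

theorem chain_inj (A Q : ℤ → (Euc n →L[ℝ] Euc n)) (K' α' : ℝ)
    (D : ExpDichotomyOn A {k : ℤ | k ≤ 0} Q K' α') {j : ℤ} (hj : j ≤ 0) :
    ∀ k, j ≤ k → k ≤ 0 →
      Set.InjOn (Phi A k j) (LinearMap.ker (Q j : Euc n →ₗ[ℝ] Euc n) : Set (Euc n)) ∧
      Set.MapsTo (Phi A k j) (LinearMap.ker (Q j : Euc n →ₗ[ℝ] Euc n)) (LinearMap.ker (Q k : Euc n →ₗ[ℝ] Euc n)) := by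
  intro k hjk
  refine Int.le_induction (motive := fun k _ => k ≤ 0 →
      Set.InjOn (Phi A k j) (LinearMap.ker (Q j : Euc n →ₗ[ℝ] Euc n) : Set (Euc n)) ∧
      Set.MapsTo (Phi A k j) (LinearMap.ker (Q j : Euc n →ₗ[ℝ] Euc n)) (LinearMap.ker (Q k : Euc n →ₗ[ℝ] Euc n))) ?_ ?_ k hjk
  · intro _
    constructor
    · intro a _ b _ h
      rw [Phi_self] at h
      simpa using h
    · intro x hx
      rw [Phi_self]
      simpa using hx
  · intro k hk ih h0
    have hk0 : k ≤ 0 := by omega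
    obtain ⟨ihI, ihM⟩ := ih hk0
    have hb := D.bijOn k hk0 h0
    constructor
    · intro a ha b hb' h
      rw [Phi_succ A hk] at h
      simp only [ContinuousLinearMap.comp_apply] at h
      have h2 : Phi A k j a = Phi A k j b :=
        hb.injOn (ihM ha) (ihM hb') h
      exact ihI ha hb' h2
    · intro x hx
      rw [Phi_succ A hk]
      simp only [ContinuousLinearMap.comp_apply]
      exact hb.mapsTo (ihM hx)


theorem exp_helper {α : ℝ} (hα : 0 < α) {j k mz : ℤ} (hk : k ≤ 0) (hjm : j ≤ mz) :
    Real.exp (-α * ((mz:ℝ) - (j:ℝ))) ≤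
      Real.exp (α * (-(mz:ℝ))) * Real.exp (-α * ((k:ℝ) - (j:ℝ))) := by
  rw [← Real.exp_add]
  apply Real.exp_le_exp.2
  have hk' : (k:ℝ) ≤ 0 := by exact_mod_cast hk
  nlinarith

theorem exp_helper2 {α : ℝ} (hα : 0 < α) {j k mz : ℤ} (hk : k ≤ 0) (hmj : mz < j)
    (hjk : j ≤ k) :
    1 ≤ Real.exp (α * (-(mz:ℝ))) * Real.exp (-α * ((k:ℝ) - (j:ℝ))) := by
  rw [← Real.exp_add, show (1:ℝ) = Real.exp 0 by simp]
  apply Real.exp_le_exp.2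
  have hint : (k - j : ℤ) ≤ -mz := by omega
  have hr : (k:ℝ) - (j:ℝ) ≤ -(mz:ℝ) := by exact_mod_cast hint
  nlinarith

end St14

set_option maxHeartbeats 2000000

/-- for `m < 0`, suppose the equation has an exponential dichotomy on
`(-∞, m]` with projection `P` of rank `r`. Then the equation has an exponential
dichotomy on `(-∞, 0]` with a projection family `Q` satisfying `Q(k) = P(k)` for all
`k ≤ m` if and only if `Φ(0,m)` is one-to-one on `N(P(m))` and
`N(Φ(0,m)) ⊆ R(P(m))`. -/
theorem statement14 {n : ℕ} (A P : ℤ → (Euc n →L[ℝ] Euc n)) (K α : ℝ)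
    (m : ℤ) (hm : m < 0) (r : ℕ)
    (hED : ExpDichotomyOn A {k : ℤ | k ≤ m} P K α)
    (hrank : Module.finrank ℝ (LinearMap.range (P m : Euc n →ₗ[ℝ] Euc n)) = r) :
    (∃ (Q : ℤ → (Euc n →L[ℝ] Euc n)) (K' α' : ℝ),
        ExpDichotomyOn A {k : ℤ | k ≤ 0} Q K' α' ∧ ∀ k : ℤ, k ≤ m → Q k = P k) ↔
    (Set.InjOn (Phi A 0 m) (LinearMap.ker (P m : Euc n →ₗ[ℝ] Euc n) : Set (Euc n)) ∧
      LinearMap.ker (Phi A 0 m : Euc n →ₗ[ℝ] Euc n) ≤ LinearMap.range (P m : Euc n →ₗ[ℝ] Euc n)) := by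
  constructor
  · rintro ⟨Q, K', α', D, hQP⟩
    have h00 : (0:ℤ) ∈ {k : ℤ | k ≤ 0} := Set.mem_ofPred.mpr (le_refl 0)
    have hm0 : m ∈ {k : ℤ | k ≤ 0} := Set.mem_ofPred.mpr (le_of_lt hm)
    have hch := St14.chain_inj A Q K' α' D (le_of_lt hm) 0 (le_of_lt hm) le_rfl
    have hQm : Q m = P m := hQP m le_rfl
    constructor
    · rw [← hQm]; exact hch.1
    · intro x hx
      have hx0 : Phi A 0 m x = 0 := hx
      have hinv := D.invariance m hm0 0 h00 (le_of_lt hm)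
      have e1 : Phi A 0 m (Q m x) = 0 := by
        have h := DFunLike.congr_fun hinv x
        simp only [ContinuousLinearMap.comp_apply] at h
        rw [h, hx0, map_zero]
      have hprojm := D.proj m hm0
      have e2 : x - Q m x ∈ LinearMap.ker (Q m : Euc n →ₗ[ℝ] Euc n) := by
        rw [LinearMap.mem_ker, ContinuousLinearMap.coe_coe, map_sub]
        have h := DFunLike.congr_fun hprojm x
        simp only [ContinuousLinearMap.comp_apply] at h
        rw [h, sub_self]
      have e3 : Phi A 0 m (x - Q m x) = 0 := by
        rw [map_sub, hx0, e1, sub_zero]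
      have e4 : (0 : Euc n) ∈ LinearMap.ker (Q m : Euc n →ₗ[ℝ] Euc n) := zero_mem _
      have e5 : x - Q m x = 0 := hch.1 e2 e4 (by rw [e3, map_zero])
      have e6 : x = Q m x := by rwa [sub_eq_zero] at e5
      rw [hQm] at e6
      exact ⟨x, e6.symm⟩
  · rintro ⟨H1, H2⟩
    have hα := hED.alpha_pos
    have hK1 : 1 ≤ K := hED.one_le_K
    have memm : ∀ {k : ℤ}, k ≤ m → k ∈ {k : ℤ | k ≤ m} := fun h => Set.mem_ofPred.mpr h
    have hprojm : P m ∘L P m = P m := hED.proj m (memm le_rfl)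
    have hRK := St14.Rk_spec A P m H1 H2 hprojm
    set Q : ℤ → (Euc n →L[ℝ] Euc n) := fun k =>
      if k ≤ m then P k
      else St14.projCLM (St14.Rk A P m (k - m).toNat) (St14.Uk A P m (k - m).toNat) with hQdef
    have hQle : ∀ k, k ≤ m → Q k = P k := by
      intro k hk; simp only [hQdef]; exact if_pos hk
    have hQgt : ∀ k, m < k →
        Q k = St14.projCLM (St14.Rk A P m (k - m).toNat) (St14.Uk A P m (k - m).toNat) := by
      intro k hk; simp only [hQdef]; exact if_neg (not_le.2 hk)
    have hIC : ∀ k, m ≤ k → k ≤ 0 →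
        IsCompl (St14.Rk A P m (k - m).toNat) (St14.Uk A P m (k - m).toNat) := by
      intro k h1 h2
      exact (hRK (k - m).toNat (by omega)).1.1
    have hkerEq : ∀ k, m ≤ k → k ≤ 0 →
        LinearMap.ker (Q k : Euc n →ₗ[ℝ] Euc n) = St14.Uk A P m (k - m).toNat := by
      intro k h1 h2
      rcases lt_or_eq_of_le h1 with h | h
      · rw [hQgt k h, St14.projCLM_ker (hIC k h1 h2)]
      · rw [hQle k (le_of_eq h.symm), ← h, show (m - m).toNat = 0 by omega, St14.Uk_zero]
    have hrngEq : ∀ k, m ≤ k → k ≤ 0 →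
        LinearMap.range (Q k : Euc n →ₗ[ℝ] Euc n) = St14.Rk A P m (k - m).toNat := by
      intro k h1 h2
      rcases lt_or_eq_of_le h1 with h | h
      · rw [hQgt k h, St14.projCLM_range (hIC k h1 h2)]
      · rw [hQle k (le_of_eq h.symm), ← h, show (m - m).toNat = 0 by omega, St14.Rk_zero]
    have hQproj : ∀ k, k ≤ 0 → Q k ∘L Q k = Q k := by
      intro k hk
      rcases le_or_gt k m with h | h
      · rw [hQle k h]; exact hED.proj k (memm h)
      · rw [hQgt k h]; exact St14.projCLM_idem (hIC k (le_of_lt h) hk)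
    have hQQ : ∀ k, k ≤ 0 → ∀ x, Q k (Q k x) = Q k x := by
      intro k hk x
      have h := DFunLike.congr_fun (hQproj k hk) x
      simpa using h
    have hfix : ∀ k, k ≤ 0 → ∀ x ∈ LinearMap.range (Q k : Euc n →ₗ[ℝ] Euc n), Q k x = x := by
      intro k hk x hx
      obtain ⟨y, rfl⟩ := hx
      exact hQQ k hk y
    have hsub : ∀ k, k ≤ 0 → ∀ x, x - Q k x ∈ LinearMap.ker (Q k : Euc n →ₗ[ℝ] Euc n) := by
      intro k hk x
      rw [LinearMap.mem_ker, ContinuousLinearMap.coe_coe, map_sub, hQQ k hk, sub_self]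
    -- propagation of kernels within (-∞, m]
    have hUP : ∀ j k : ℤ, j ≤ k → k ≤ m → ∀ x ∈ LinearMap.ker (P j : Euc n →ₗ[ℝ] Euc n),
        Phi A k j x ∈ LinearMap.ker (P k : Euc n →ₗ[ℝ] Euc n) := by
      intro j k hjk hkm x hx
      have hinv := hED.invariance j (memm (by omega)) k (memm hkm) hjk
      have h := DFunLike.congr_fun hinv x
      simp only [ContinuousLinearMap.comp_apply] at h
      rw [LinearMap.mem_ker, ContinuousLinearMap.coe_coe] at hx ⊢
      rw [← h, hx, map_zero]
    -- kernel mapping on (-∞, 0]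
    have hmapU : ∀ j k : ℤ, j ≤ k → k ≤ 0 → ∀ x ∈ LinearMap.ker (Q j : Euc n →ₗ[ℝ] Euc n),
        Phi A k j x ∈ LinearMap.ker (Q k : Euc n →ₗ[ℝ] Euc n) := by
      intro j k hjk hk0 x hx
      rcases le_or_gt k m with hkm | hkm
      · rw [hQle j (by omega)] at hx
        rw [hQle k hkm]
        exact hUP j k hjk hkm x hx
      · rw [hkerEq k (le_of_lt hkm) hk0, St14.Uk_eq A P m (le_of_lt hkm)]
        rcases le_or_gt j m with hjm | hjm
        · rw [hQle j hjm] at hx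
          have hxm : Phi A m j x ∈ LinearMap.ker (P m : Euc n →ₗ[ℝ] Euc n) := hUP j m hjm le_rfl x hx
          rw [St14.Phi_comp_apply A hjm (le_of_lt hkm) x]
          exact Submodule.mem_map.2 ⟨Phi A m j x, hxm, rfl⟩
        · rw [hkerEq j (le_of_lt hjm) (by omega), St14.Uk_eq A P m (le_of_lt hjm)] at hx
          obtain ⟨u, hu, rfl⟩ := Submodule.mem_map.1 hx
          refine Submodule.mem_map.2 ⟨u, hu, ?_⟩
          exact St14.Phi_comp_apply A (le_of_lt hjm) hjk u
    -- range chain within [m, 0]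
    have hRstep : ∀ j : ℤ, m ≤ j → ∀ k : ℤ, j ≤ k → k ≤ 0 →
        ∀ x ∈ St14.Rk A P m (j - m).toNat,
          Phi A k j x ∈ St14.Rk A P m (k - m).toNat := by
      intro j hmj k hjk
      refine Int.le_induction (motive := fun k _ => k ≤ 0 →
        ∀ x ∈ St14.Rk A P m (j - m).toNat,
          Phi A k j x ∈ St14.Rk A P m (k - m).toNat) ?_ ?_ k hjk
      · intro _ x hx
        rw [St14.Phi_self]
        simpa using hx
      · intro k hk ih hk10 x hx
        have hk0 : k ≤ 0 := by omega
        have h1 := ih hk0 x hx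
        have hstep := (hRK (k - m).toNat (by omega)).2 (by omega)
        have hcast : m + (((k - m).toNat : ℕ) : ℤ) = k := by omega
        rw [hcast] at hstep
        have hcast2 : (k + 1 - m).toNat = (k - m).toNat + 1 := by omega
        rw [hcast2, St14.Phi_succ A hk]
        exact hstep (Submodule.mem_map.2 ⟨_, h1, rfl⟩)
    -- range mapping on (-∞, 0]
    have hmapR : ∀ j k : ℤ, j ≤ k → k ≤ 0 → ∀ x ∈ LinearMap.range (Q j : Euc n →ₗ[ℝ] Euc n),
        Phi A k j x ∈ LinearMap.range (Q k : Euc n →ₗ[ℝ] Euc n) := by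
      intro j k hjk hk0 x hx
      rcases le_or_gt k m with hkm | hkm
      · rw [hQle j (by omega)] at hx
        rw [hQle k hkm]
        obtain ⟨y, rfl⟩ := hx
        have hinv := hED.invariance j (memm (by omega)) k (memm hkm) hjk
        have h := DFunLike.congr_fun hinv y
        simp only [ContinuousLinearMap.comp_apply] at h
        exact ⟨Phi A k j y, h.symm⟩
      · rw [hrngEq k (le_of_lt hkm) hk0]
        rcases le_or_gt j m with hjm | hjm
        · have hxm : Phi A m j x ∈ LinearMap.range (P m : Euc n →ₗ[ℝ] Euc n) := by
            rw [hQle j hjm] at hx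
            obtain ⟨y, rfl⟩ := hx
            have hinv := hED.invariance j (memm hjm) m (memm le_rfl) hjm
            have h := DFunLike.congr_fun hinv y
            simp only [ContinuousLinearMap.comp_apply] at h
            exact ⟨Phi A m j y, h.symm⟩
          have hx0 : Phi A m j x ∈ St14.Rk A P m ((m - m).toNat) := by
            rw [show (m - m).toNat = 0 by omega, St14.Rk_zero]
            exact hxm
          have h2 := hRstep m le_rfl k (le_of_lt hkm) hk0 (Phi A m j x) hx0
          rwa [← St14.Phi_comp_apply A hjm (le_of_lt hkm) x] at h2
        · rw [hrngEq j (le_of_lt hjm) (by omega)] at hx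
          exact hRstep j (le_of_lt hjm) k hjk hk0 x hx
    -- the partial inverses T k of Phi(k,m) on the unstable spaces
    have hTex : ∀ k : ℤ, ∃ T : Euc n →L[ℝ] Euc n, m < k → k ≤ 0 →
        (∀ x, T x ∈ LinearMap.ker (P m : Euc n →ₗ[ℝ] Euc n)) ∧
        (∀ x ∈ LinearMap.ker (Q k : Euc n →ₗ[ℝ] Euc n), Phi A k m (T x) = x) ∧
        (∀ u ∈ LinearMap.ker (P m : Euc n →ₗ[ℝ] Euc n), T (Phi A k m u) = u) ∧
        T ∘L (1 - Q k) = T := by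
      intro k
      by_cases hc : m < k ∧ k ≤ 0
      · obtain ⟨hmk', hk0⟩ := hc
        have hmk := le_of_lt hmk'
        have hker := hkerEq k hmk hk0
        have hV : LinearMap.ker (Q k : Euc n →ₗ[ℝ] Euc n) =
            (LinearMap.ker (P m : Euc n →ₗ[ℝ] Euc n)).map (Phi A k m : Euc n →ₗ[ℝ] Euc n) := by
          rw [hker, St14.Uk_eq A P m hmk]
        have hinj := St14.injOn_of_le A P m H1 hmk hk0
        set g : (LinearMap.ker (P m : Euc n →ₗ[ℝ] Euc n)) →ₗ[ℝ] Euc n :=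
          ((Phi A k m : Euc n →ₗ[ℝ] Euc n)).comp (LinearMap.ker (P m : Euc n →ₗ[ℝ] Euc n)).subtype with hg
        have hmemg : ∀ u : LinearMap.ker (P m : Euc n →ₗ[ℝ] Euc n), g u ∈ LinearMap.ker (Q k : Euc n →ₗ[ℝ] Euc n) := by
          intro u
          rw [hV]
          exact Submodule.mem_map.2 ⟨u.1, u.2, rfl⟩
        set g' : (LinearMap.ker (P m : Euc n →ₗ[ℝ] Euc n)) →ₗ[ℝ] LinearMap.ker (Q k : Euc n →ₗ[ℝ] Euc n) :=
          LinearMap.codRestrict (LinearMap.ker (Q k : Euc n →ₗ[ℝ] Euc n)) g hmemg with hg'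
        have hg'val : ∀ u : LinearMap.ker (P m : Euc n →ₗ[ℝ] Euc n), (g' u : Euc n) = Phi A k m u.1 := by
          intro u; rfl
        have hg'inj : Function.Injective g' := by
          intro u v h
          apply Subtype.ext
          apply hinj u.2 v.2
          have h2 := congrArg (Subtype.val) h
          rw [hg'val, hg'val] at h2
          exact h2
        have hg'surj : Function.Surjective g' := by
          rintro ⟨y, hy⟩
          rw [hV] at hy
          obtain ⟨u, hu, huy⟩ := Submodule.mem_map.1 hy
          exact ⟨⟨u, hu⟩, Subtype.ext huy⟩
        set e := LinearEquiv.ofBijective g' (⟨hg'inj, hg'surj⟩ : Function.Bijective g') with he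
        have hmem1 : ∀ x : Euc n, (1 - Q k) x ∈ LinearMap.ker (Q k : Euc n →ₗ[ℝ] Euc n) := by
          intro x
          have hx : (1 - Q k) x = x - Q k x := by
            simp [ContinuousLinearMap.sub_apply]
          rw [hx]
          exact hsub k hk0 x
        set σ : Euc n →ₗ[ℝ] (LinearMap.ker (P m : Euc n →ₗ[ℝ] Euc n)) :=
          (e.symm : LinearMap.ker (Q k : Euc n →ₗ[ℝ] Euc n) →ₗ[ℝ] LinearMap.ker (P m : Euc n →ₗ[ℝ] Euc n)).comp
            (LinearMap.codRestrict (LinearMap.ker (Q k : Euc n →ₗ[ℝ] Euc n))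
              ((1 - Q k : Euc n →L[ℝ] Euc n) : Euc n →ₗ[ℝ] Euc n) hmem1) with hσ
        set T := LinearMap.toContinuousLinearMap
          ((LinearMap.ker (P m : Euc n →ₗ[ℝ] Euc n)).subtype.comp σ) with hT
        have hT_apply : ∀ x : Euc n,
            T x = ((e.symm ⟨(1 - Q k) x, hmem1 x⟩ : LinearMap.ker (P m : Euc n →ₗ[ℝ] Euc n)) : Euc n) := by
          intro x; rfl
        have key : ∀ z (hz : z ∈ LinearMap.ker (Q k : Euc n →ₗ[ℝ] Euc n)),
            Phi A k m ((e.symm ⟨z, hz⟩ : LinearMap.ker (P m : Euc n →ₗ[ℝ] Euc n)) : Euc n) = z := by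
          intro z hz
          have h2 := congrArg (Subtype.val) (e.apply_symm_apply ⟨z, hz⟩)
          rw [he] at h2
          change (g' _ : Euc n) = z at h2
          rw [hg'val] at h2
          exact h2
        have key2 : ∀ (u : Euc n) (hu : u ∈ LinearMap.ker (P m : Euc n →ₗ[ℝ] Euc n)) (hv : Phi A k m u ∈ LinearMap.ker (Q k : Euc n →ₗ[ℝ] Euc n)),
            e.symm ⟨Phi A k m u, hv⟩ = ⟨u, hu⟩ := by
          intro u hu hv
          rw [LinearEquiv.symm_apply_eq]
          apply Subtype.ext
          rw [he]; change _ = (g' ⟨u, hu⟩ : Euc n); rw [hg'val]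
        have t1 : ∀ x, T x ∈ LinearMap.ker (P m : Euc n →ₗ[ℝ] Euc n) := by
          intro x
          rw [hT_apply]
          exact (e.symm ⟨(1 - Q k) x, hmem1 x⟩).2
        have t2 : ∀ x ∈ LinearMap.ker (Q k : Euc n →ₗ[ℝ] Euc n), Phi A k m (T x) = x := by
          intro x hx
          have hfix1 : (1 - Q k) x = x := by
            have : Q k x = 0 := hx
            simp [ContinuousLinearMap.sub_apply, this]
          rw [hT_apply, key _ (hmem1 x), hfix1]
        have t3 : ∀ u ∈ LinearMap.ker (P m : Euc n →ₗ[ℝ] Euc n), T (Phi A k m u) = u := by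
          intro u hu
          have hvm : Phi A k m u ∈ LinearMap.ker (Q k : Euc n →ₗ[ℝ] Euc n) := by
            rw [hV]
            exact Submodule.mem_map.2 ⟨u, hu, rfl⟩
          have hfix1 : (1 - Q k) (Phi A k m u) = Phi A k m u := by
            have : Q k (Phi A k m u) = 0 := hvm
            simp [ContinuousLinearMap.sub_apply, this]
          have heq : (⟨(1 - Q k) (Phi A k m u), hmem1 _⟩ : LinearMap.ker (Q k : Euc n →ₗ[ℝ] Euc n))
              = ⟨Phi A k m u, hvm⟩ := Subtype.ext hfix1
          rw [hT_apply, heq, key2 u hu hvm]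
        have t4 : T ∘L (1 - Q k) = T := by
          refine ContinuousLinearMap.ext fun x => ?_
          have h1 : (1 - Q k) ((1 - Q k) x) = (1 - Q k) x := by
            have h0 : Q k ((1 - Q k) x) = 0 := hmem1 x
            have h2 : (1 - Q k) ((1 - Q k) x) = (1 - Q k) x - Q k ((1 - Q k) x) := by
              simp [ContinuousLinearMap.sub_apply]
            rw [h2, h0, sub_zero]
          show T ((1 - Q k) x) = T x
          rw [hT_apply, hT_apply]
          congr 1
          apply congrArg
          exact Subtype.ext h1
        exact ⟨T, fun _ _ => ⟨t1, t2, t3, t4⟩⟩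
      · exact ⟨0, fun h1 h2 => absurd ⟨h1, h2⟩ hc⟩
    choose T hT using hTex
    -- grid constants
    obtain ⟨C1, hC1nn, hC1⟩ := St14.exists_bound (Set.finite_Icc m 0)
      (fun k : ℤ => ‖Phi A k m‖)
    obtain ⟨C2, hC2nn, hC2⟩ := St14.exists_bound
      ((Set.finite_Icc m 0).prod (Set.finite_Icc m 0))
      (fun p : ℤ × ℤ => ‖Phi A p.2 p.1 ∘L Q p.1‖)
    obtain ⟨C3, hC3nn, hC3⟩ := St14.exists_bound (Set.finite_Icc m 0)
      (fun k : ℤ => ‖T k‖)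
    set E0 : ℝ := Real.exp (α * (-(m:ℝ))) with hE0def
    have hE0 : 1 ≤ E0 := by
      apply Real.one_le_exp
      have : (0:ℝ) < -(m:ℝ) := by
        have : (m:ℝ) < 0 := by exact_mod_cast hm
        linarith
      nlinarith
    set S : ℝ := K + C1 * K + C2 + K * C3 + C1 * C3 + 1 with hSdef
    have hSK : K ≤ S := by nlinarith [mul_nonneg hC1nn (le_trans zero_le_one hK1), mul_nonneg (le_trans zero_le_one hK1) hC3nn, mul_nonneg hC1nn hC3nn]
    have hS1 : 1 ≤ S := by nlinarith [mul_nonneg hC1nn (le_trans zero_le_one hK1), mul_nonneg (le_trans zero_le_one hK1) hC3nn, mul_nonneg hC1nn hC3nn]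
    set K' : ℝ := S * E0 with hK'def
    have hS0 : (0:ℝ) ≤ S := by linarith
    have hSE : S ≤ K' := by
      rw [hK'def]
      exact le_mul_of_one_le_right hS0 hE0
    have hKK' : K ≤ K' := le_trans hSK hSE
    have hK'1 : 1 ≤ K' := le_trans hS1 hSE
    -- inverse family
    obtain ⟨Ψ₀, hΨ₀⟩ := hED.backward
    have hexp1 : ∀ {j k : ℤ}, k ≤ 0 → j ≤ m →
        Real.exp (-α * ((m:ℝ) - (j:ℝ))) ≤ E0 * Real.exp (-α * ((k:ℝ) - (j:ℝ))) :=
      fun hk hjm => St14.exp_helper hα hk hjm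
    have hΨex : ∀ j k : ℤ, ∃ ψ : Euc n →L[ℝ] Euc n, j ≤ k → k ≤ 0 →
        (∀ x ∈ LinearMap.ker (Q j : Euc n →ₗ[ℝ] Euc n), ψ (Phi A k j x) = x) ∧
        (∀ x ∈ LinearMap.ker (Q k : Euc n →ₗ[ℝ] Euc n), ψ x ∈ LinearMap.ker (Q j : Euc n →ₗ[ℝ] Euc n) ∧ Phi A k j (ψ x) = x) ∧
        ‖ψ ∘L (1 - Q k)‖ ≤ K' * Real.exp (-α * ((k : ℝ) - (j : ℝ))) := by
      intro j k
      by_cases hcond : j ≤ k ∧ k ≤ 0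
      · obtain ⟨hjk, hk0⟩ := hcond
        rcases le_or_gt k m with hkm | hkm
        · refine ⟨Ψ₀ j k, fun _ _ => ?_⟩
          have hb := hΨ₀ j (memm (by omega)) k (memm hkm) hjk
          rw [hQle j (by omega), hQle k hkm]
          exact ⟨hb.1, hb.2.1,
            le_trans hb.2.2 (mul_le_mul_of_nonneg_right hKK' (Real.exp_nonneg _))⟩
        · obtain ⟨t1, t2, t3, t4⟩ := hT k hkm hk0
          have hkIcc : k ∈ Set.Icc m 0 := ⟨le_of_lt hkm, hk0⟩
          have hTnorm := hC3 k hkIcc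
          rcases le_or_gt j m with hjm | hjm
          · have hb := hΨ₀ j (memm hjm) m (memm le_rfl) hjm
            refine ⟨Ψ₀ j m ∘L T k, fun _ _ => ⟨?_, ?_, ?_⟩⟩
            · intro x hx
              rw [hQle j hjm] at hx
              have hxm : Phi A m j x ∈ LinearMap.ker (P m : Euc n →ₗ[ℝ] Euc n) := hUP j m hjm le_rfl x hx
              have hsplit : Phi A k j x = Phi A k m (Phi A m j x) :=
                St14.Phi_comp_apply A hjm (le_of_lt hkm) x
              show (Ψ₀ j m) (T k (Phi A k j x)) = x
              rw [hsplit, t3 _ hxm]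
              exact hb.1 x hx
            · intro x hx
              have hTx := t1 x
              have h2 := hb.2.1 (T k x) hTx
              constructor
              · rw [hQle j hjm]
                exact h2.1
              · show Phi A k j ((Ψ₀ j m) (T k x)) = x
                rw [St14.Phi_comp_apply A hjm (le_of_lt hkm), h2.2, t2 x hx]
            · have heq : (Ψ₀ j m ∘L T k) ∘L (1 - Q k) = Ψ₀ j m ∘L T k := by
                rw [ContinuousLinearMap.comp_assoc, t4]
              rw [heq]
              have hb3 := hb.2.2
              have hKexp : (0:ℝ) ≤ K * Real.exp (-α * ((m:ℝ) - (j:ℝ))) :=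
                mul_nonneg (by linarith) (Real.exp_nonneg _)
              have hnorm : ∀ x, ‖(Ψ₀ j m ∘L T k) x‖ ≤
                  (K * Real.exp (-α * ((m:ℝ) - (j:ℝ))) * C3) * ‖x‖ := by
                intro x
                have hPmT : (1 - P m) (T k x) = T k x := by
                  have h0 : P m (T k x) = 0 := t1 x
                  have h2 : (1 - P m) (T k x) = T k x - P m (T k x) := by
                    simp [ContinuousLinearMap.sub_apply]
                  rw [h2, h0, sub_zero]
                have h1 : (Ψ₀ j m ∘L T k) x = (Ψ₀ j m ∘L (1 - P m)) (T k x) := by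
                  show (Ψ₀ j m) (T k x) = (Ψ₀ j m) ((1 - P m) (T k x))
                  rw [hPmT]
                rw [h1]
                calc ‖(Ψ₀ j m ∘L (1 - P m)) (T k x)‖
                    ≤ ‖Ψ₀ j m ∘L (1 - P m)‖ * ‖T k x‖ :=
                      ContinuousLinearMap.le_opNorm _ _
                  _ ≤ (K * Real.exp (-α * ((m:ℝ) - (j:ℝ)))) * (C3 * ‖x‖) := by
                      refine mul_le_mul hb3 ?_ (norm_nonneg _) hKexp
                      exact le_trans (ContinuousLinearMap.le_opNorm _ _)
                        (mul_le_mul_of_nonneg_right hTnorm (norm_nonneg _))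
                  _ = (K * Real.exp (-α * ((m:ℝ) - (j:ℝ))) * C3) * ‖x‖ := by ring
              have hop := ContinuousLinearMap.opNorm_le_bound _
                (mul_nonneg hKexp hC3nn) hnorm
              refine le_trans hop ?_
              have he1 := hexp1 hk0 hjm
              have hKC3 : K * C3 ≤ S := by
                rw [hSdef]
                nlinarith [mul_nonneg hC1nn (le_trans zero_le_one hK1),
                  mul_nonneg hC1nn hC3nn]
              calc K * Real.exp (-α * ((m:ℝ) - (j:ℝ))) * C3
                  ≤ K * (E0 * Real.exp (-α * ((k:ℝ) - (j:ℝ)))) * C3 := by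
                    apply mul_le_mul_of_nonneg_right
                      (mul_le_mul_of_nonneg_left he1 (by linarith)) hC3nn
                _ = (K * C3) * E0 * Real.exp (-α * ((k:ℝ) - (j:ℝ))) := by ring
                _ ≤ S * E0 * Real.exp (-α * ((k:ℝ) - (j:ℝ))) := by
                    apply mul_le_mul_of_nonneg_right
                      (mul_le_mul_of_nonneg_right hKC3 (by linarith)) (Real.exp_nonneg _)
                _ = K' * Real.exp (-α * ((k:ℝ) - (j:ℝ))) := by rw [hK'def]
          · refine ⟨Phi A j m ∘L T k, fun _ _ => ⟨?_, ?_, ?_⟩⟩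
            · intro x hx
              rw [hkerEq j (le_of_lt hjm) (by omega), St14.Uk_eq A P m (le_of_lt hjm)] at hx
              obtain ⟨u, hu, rfl⟩ := Submodule.mem_map.1 hx
              show Phi A j m (T k (Phi A k j (Phi A j m u))) = Phi A j m u
              rw [← St14.Phi_comp_apply A (le_of_lt hjm) hjk u, t3 u hu]
            · intro x hx
              constructor
              · rw [hkerEq j (le_of_lt hjm) (by omega), St14.Uk_eq A P m (le_of_lt hjm)]
                exact Submodule.mem_map.2 ⟨T k x, t1 x, rfl⟩
              · show Phi A k j (Phi A j m (T k x)) = x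
                rw [← St14.Phi_comp_apply A (le_of_lt hjm) hjk (T k x), t2 x hx]
            · have heq : (Phi A j m ∘L T k) ∘L (1 - Q k) = Phi A j m ∘L T k := by
                rw [ContinuousLinearMap.comp_assoc, t4]
              rw [heq]
              have hjIcc : j ∈ Set.Icc m 0 := ⟨le_of_lt hjm, by omega⟩
              have h1 : ‖Phi A j m ∘L T k‖ ≤ C1 * C3 :=
                le_trans (ContinuousLinearMap.opNorm_comp_le _ _)
                  (mul_le_mul (hC1 j hjIcc) hTnorm (norm_nonneg _) hC1nn)
              refine le_trans h1 ?_
              have h12 := St14.exp_helper2 hα hk0 hjm hjk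
              have hC1C3S : C1 * C3 ≤ S := by
                rw [hSdef]
                nlinarith [mul_nonneg hC1nn (le_trans zero_le_one hK1),
                  mul_nonneg (le_trans zero_le_one hK1) hC3nn]
              calc C1 * C3 ≤ S := hC1C3S
                _ = S * 1 := (mul_one S).symm
                _ ≤ S * (E0 * Real.exp (-α * ((k:ℝ) - (j:ℝ)))) :=
                    mul_le_mul_of_nonneg_left h12 hS0
                _ = K' * Real.exp (-α * ((k:ℝ) - (j:ℝ))) := by rw [hK'def]; ring
      · exact ⟨0, fun h1 h2 => absurd ⟨h1, h2⟩ hcond⟩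
    -- ranks
    have hr : ∀ k : ℤ, k ≤ 0 → Module.finrank ℝ (LinearMap.range (Q k : Euc n →ₗ[ℝ] Euc n)) = r := by
      intro k hk
      rcases le_or_gt k m with h | h
      · rw [hQle k h, ← hrank]
        exact hED.rank_const k (memm h) m (memm le_rfl)
      · rw [hrngEq k (le_of_lt h) hk]
        have hcompl := hIC k (le_of_lt h) hk
        have h1 := Submodule.finrank_add_eq_of_isCompl hcompl
        have h2 := St14.Uk_finrank A P m H1 (le_of_lt h) hk
        have h3 := Submodule.finrank_add_eq_of_isCompl
          (St14.isCompl_range_ker_of_proj hprojm)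
        have hE : Module.finrank ℝ (Euc n) = n := finrank_euclideanSpace_fin
        rw [hE] at h1 h3
        rw [h2] at h1
        rw [hrank] at h3
        omega
    -- assemble
    refine ⟨Q, K', α, ⟨hK'1, hα, ?_, ?_, ?_, ?_, ?_, ?_⟩, hQle⟩
    · intro k hk
      exact hQproj k hk
    · intro k hk l hl
      rw [hr k hk, hr l hl]
    · intro j hj k hk hjk
      apply St14.comm_of_proj
      · intro x
        exact hfix k hk _ (hmapR j k hjk hk _ ⟨x, rfl⟩)
      · intro x
        exact hmapU j k hjk hk _ (hsub j hj x)
    · intro j hj k hk hjk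
      have hk0 : k ≤ 0 := hk
      rcases le_or_gt k m with hkm | hkm
      · rw [hQle j (by omega)]
        refine le_trans (hED.forward j (memm (by omega)) k (memm hkm) hjk) ?_
        exact mul_le_mul_of_nonneg_right hKK' (Real.exp_nonneg _)
      · rcases le_or_gt j m with hjm | hjm
        · have hsplit : Phi A k j ∘L Q j = Phi A k m ∘L (Phi A m j ∘L P j) := by
            rw [hQle j hjm, St14.Phi_comp A hjm (le_of_lt hkm),
              ContinuousLinearMap.comp_assoc]
          rw [hsplit]
          have hkIcc : k ∈ Set.Icc m 0 := ⟨le_of_lt hkm, hk0⟩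
          have h1 : ‖Phi A k m ∘L (Phi A m j ∘L P j)‖ ≤
              C1 * (K * Real.exp (-α * ((m:ℝ) - (j:ℝ)))) :=
            le_trans (ContinuousLinearMap.opNorm_comp_le _ _)
              (mul_le_mul (hC1 k hkIcc)
                (hED.forward j (memm hjm) m (memm le_rfl) hjm) (norm_nonneg _) hC1nn)
          refine le_trans h1 ?_
          have he1 := hexp1 hk0 hjm
          have hC1K : C1 * K ≤ S := by
            rw [hSdef]
            nlinarith [mul_nonneg (le_trans zero_le_one hK1) hC3nn,
              mul_nonneg hC1nn hC3nn]
          calc C1 * (K * Real.exp (-α * ((m:ℝ) - (j:ℝ))))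
              ≤ C1 * (K * (E0 * Real.exp (-α * ((k:ℝ) - (j:ℝ))))) := by
                apply mul_le_mul_of_nonneg_left
                  (mul_le_mul_of_nonneg_left he1 (by linarith)) hC1nn
            _ = (C1 * K) * E0 * Real.exp (-α * ((k:ℝ) - (j:ℝ))) := by ring
            _ ≤ S * E0 * Real.exp (-α * ((k:ℝ) - (j:ℝ))) := by
                apply mul_le_mul_of_nonneg_right
                  (mul_le_mul_of_nonneg_right hC1K (by linarith)) (Real.exp_nonneg _)
            _ = K' * Real.exp (-α * ((k:ℝ) - (j:ℝ))) := by rw [hK'def]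
        · have hp : (j, k) ∈ (Set.Icc m 0) ×ˢ (Set.Icc m 0) :=
            Set.mem_prod.2 ⟨⟨le_of_lt hjm, by omega⟩, ⟨by omega, hk0⟩⟩
          have h1 := hC2 (j, k) hp
          refine le_trans h1 ?_
          have h12 := St14.exp_helper2 hα hk0 hjm hjk
          have hC2S : C2 ≤ S := by
            rw [hSdef]
            nlinarith [mul_nonneg hC1nn (le_trans zero_le_one hK1),
              mul_nonneg (le_trans zero_le_one hK1) hC3nn, mul_nonneg hC1nn hC3nn]
          calc C2 ≤ S := hC2S
            _ = S * 1 := (mul_one S).symm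
            _ ≤ S * (E0 * Real.exp (-α * ((k:ℝ) - (j:ℝ)))) :=
                mul_le_mul_of_nonneg_left h12 hS0
            _ = K' * Real.exp (-α * ((k:ℝ) - (j:ℝ))) := by rw [hK'def]; ring
    · intro k hk hk1
      have hk0 : k ≤ 0 := hk
      have hk10 : k + 1 ≤ 0 := hk1
      rcases le_or_gt (k+1) m with h | h
      · rw [hQle k (by omega), hQle (k+1) h]
        exact hED.bijOn k (memm (by omega)) (memm h)
      · have hmk : m ≤ k := by omega
        rw [hkerEq k hmk hk0, hkerEq (k+1) (by omega) hk10,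
          St14.Uk_eq A P m hmk, St14.Uk_eq A P m (by omega : m ≤ k + 1)]
        refine ⟨?_, ?_, ?_⟩
        · intro x hx
          obtain ⟨u, hu, rfl⟩ := Submodule.mem_map.1 hx
          refine Submodule.mem_map.2 ⟨u, hu, ?_⟩
          rw [St14.Phi_succ A hmk]
          rfl
        · intro a ha b hb hab
          obtain ⟨u, hu, rfl⟩ := Submodule.mem_map.1 ha
          obtain ⟨v, hv, rfl⟩ := Submodule.mem_map.1 hb
          have h1 : Phi A (k+1) m u = Phi A (k+1) m v := by
            rw [St14.Phi_succ A hmk]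
            exact hab
          have h2 : Phi A 0 m u = Phi A 0 m v := by
            rw [St14.Phi_comp_apply A (by omega : m ≤ k+1) hk10 u,
              St14.Phi_comp_apply A (by omega : m ≤ k+1) hk10 v, h1]
          have h3 := H1 hu hv h2
          rw [h3]
        · intro y hy
          obtain ⟨u, hu, rfl⟩ := Submodule.mem_map.1 hy
          refine ⟨Phi A k m u, Submodule.mem_map.2 ⟨u, hu, rfl⟩, ?_⟩
          rw [St14.Phi_succ A hmk]
          rfl
    · refine ⟨fun j k => (hΨex j k).choose, ?_⟩
      intro j hj k hk hjk
      exact (hΨex j k).choose_spec hjk hk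
end
end

section
/- Let a be a fixed integer and let {μ_k}_{k=a}^{∞} be a bounded sequence of nonnegative real numbers for which there exist positive numbers D, α, δ such that for all k ≥ a: μ_k ≤ D e^{−α(k−a)} + δ · Σ_{m=a}^{k−1} e^{−α(k−m−1)} μ_m + δ · Σ_{m=k}^{∞} e^{−α(m+1−k)} μ_m (sums over empty ranges are 0). If σ = δ(1+e^{−α})(1−e^{−α})^{−1} < 1, then for all k ≥ a, μ_k ≤ [D / (1 − δe^{−α}/(1 − e^{−(α+β)}))] · e^{−β(k−a)}, where β = −log(cosh α − √(sinh² α − 2δ sinh α)). -/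
set_option maxHeartbeats 1000000

noncomputable section

private lemma sum_Icc_int (a k : ℤ) (f : ℤ → ℝ) :
    ∑ m ∈ Finset.Icc a (k - 1), f m = ∑ i ∈ Finset.range (k - a).toNat, f (a + i) := by
  have h1 : Finset.Icc a (k-1) = Finset.Ico a k := by
    ext m; simp [Finset.mem_Icc, Finset.mem_Ico]
  rw [h1]
  apply Finset.sum_nbij' (fun m => (m - a).toNat) (fun i => a + i)
  · intro m hm; simp [Finset.mem_Ico] at hm ⊢; omega
  · intro i hi; simp at hi ⊢; omega
  · intro m hm; simp [Finset.mem_Ico] at hm; omega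
  · intro i hi; simp at hi; omega
  · intro m hm; simp [Finset.mem_Ico] at hm; congr 1; omega

/-- discrete Gronwall-type lemma on `[a, ∞)` (Lemma 3 (i) of Zhou–Lu–Zhang).
The infinite tail `Σ_{m=k}^{∞} e^{-α(m+1-k)} μ_m` is written as
`Σ'_{j : ℕ} e^{-α(j+1)} μ_{k+j}` via the substitution `m = k + j`. -/
theorem statement15 (a : ℤ) (μ : ℤ → ℝ) (D α δ : ℝ)
    (hD : 0 < D) (hα : 0 < α) (hδ : 0 < δ)
    (hnonneg : ∀ k : ℤ, a ≤ k → 0 ≤ μ k)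
    (hbdd : ∃ C : ℝ, ∀ k : ℤ, a ≤ k → μ k ≤ C)
    (hsum : ∀ k : ℤ, a ≤ k →
      Summable fun j : ℕ => Real.exp (-α * ((j : ℝ) + 1)) * μ (k + j))
    (hineq : ∀ k : ℤ, a ≤ k →
      μ k ≤ D * Real.exp (-α * ((k : ℝ) - (a : ℝ)))
        + δ * ∑ m ∈ Finset.Icc a (k - 1), Real.exp (-α * ((k : ℝ) - (m : ℝ) - 1)) * μ m
        + δ * ∑' j : ℕ, Real.exp (-α * ((j : ℝ) + 1)) * μ (k + j))
    (hσ : δ * (1 + Real.exp (-α)) * (1 - Real.exp (-α))⁻¹ < 1)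
    (β : ℝ)
    (hβ : β = -Real.log (Real.cosh α - Real.sqrt (Real.sinh α ^ 2 - 2 * δ * Real.sinh α))) :
    ∀ k : ℤ, a ≤ k →
      μ k ≤ D / (1 - δ * Real.exp (-α) / (1 - Real.exp (-(α + β))))
        * Real.exp (-β * ((k : ℝ) - (a : ℝ))) := by
  -- basic abbreviations
  set y := Real.exp (-α) with hy_def
  have hy0 : 0 < y := Real.exp_pos _
  have hy1 : y < 1 := by
    rw [hy_def]; exact Real.exp_lt_one_iff.mpr (by linarith)
  set s := Real.sinh α with hs_def
  set c := Real.cosh α with hc_def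
  have hs_pos : 0 < s := Real.sinh_pos_iff.mpr hα
  have hc1 : 1 ≤ c := Real.one_le_cosh α
  have hcs : c - s = y := Real.cosh_sub_sinh α
  have hcs2 : c ^ 2 - s ^ 2 = 1 := Real.cosh_sq_sub_sinh_sq α
  have hmul : Real.exp α * y = 1 := by rw [hy_def, ← Real.exp_add]; simp
  have h2sy : 2 * s * y = 1 - y ^ 2 := by
    rw [hs_def, Real.sinh_eq, ← hy_def]; nlinarith [hmul]
  have h2cy : 2 * c * y = 1 + y ^ 2 := by
    rw [hc_def, Real.cosh_eq, ← hy_def]; nlinarith [hmul]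
  -- σ < 1 rephrased
  have hδy : δ * (1 + y) < 1 - y := by
    have h1y : (0:ℝ) < 1 - y := by linarith
    calc δ * (1 + y) = δ * (1 + y) * (1 - y)⁻¹ * (1 - y) := by field_simp
    _ < 1 * (1 - y) := by
        apply mul_lt_mul_of_pos_right hσ h1y
    _ = 1 - y := by ring
  have hδs : δ * s < c - 1 := by nlinarith
  have hdisc : 0 < s ^ 2 - 2 * δ * s := by nlinarith
  set sq := Real.sqrt (s ^ 2 - 2 * δ * s) with hsq_def
  have hsq2 : sq ^ 2 = s ^ 2 - 2 * δ * s := Real.sq_sqrt hdisc.le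
  have hsq_pos : 0 < sq := Real.sqrt_pos.mpr hdisc
  have hsq_lt_s : sq < s := by nlinarith
  set x := c - sq with hx_def
  have hxy : y < x := by rw [hx_def, ← hcs]; linarith
  have hx0 : 0 < x := lt_trans hy0 hxy
  have hx1 : x < 1 := by nlinarith [hsq2, hcs2, hδs, hsq_pos.le, hc1]
  clear_value y s c sq x
  have hβx : Real.exp (-β) = x := by
    rw [hβ, neg_neg, Real.exp_log hx0]
  have hxy1 : x * y < 1 := by nlinarith
  -- characteristic identity
  have hchar : x ^ 2 - 2 * c * x + 1 + 2 * δ * s = 0 := by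
    linear_combination (x - c - sq) * hx_def + hsq2 - hcs2
  have hchar2 : δ * (1 - x * y) + δ * y * (x - y) = (x - y) * (1 - x * y) := by
    linear_combination y * hchar + x * h2cy - δ * h2sy
  -- the constant E
  have hQ : 0 < 1 - x * y := by linarith
  have hP : 0 < x - y := by linarith
  have hden : 1 - δ * y / (1 - x * y) = δ / (x - y) := by
    rw [eq_div_iff hP.ne']
    apply mul_left_cancel₀ hQ.ne'
    have ht : δ * y / (1 - x * y) * (1 - x * y) = δ * y := div_mul_cancel₀ _ hQ.ne'
    linear_combination -hchar2 - (x - y) * ht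
  set E := D * (x - y) / δ with hE_def
  clear_value E
  have hE_pos : 0 < E := by rw [hE_def]; positivity
  have hE_alt : D / (1 - δ * y / (1 - x * y)) = E := by
    rw [hden, hE_def]; field_simp
  have hexp_ab : Real.exp (-(α + β)) = x * y := by
    rw [show -(α+β) = -β + -α by ring, Real.exp_add, hβx, hy_def]
  -- the comparison function ν
  set ν : ℤ → ℝ := fun k => E * x ^ (k - a).toNat with hν_def
  clear_value ν
  have hν_nonneg : ∀ k : ℤ, 0 ≤ ν k := fun k => by
    rw [hν_def]; positivity
  -- exponent conversions
  have hexp_pow : ∀ (t : ℝ) (n : ℕ), Real.exp (-t * n) = Real.exp (-t) ^ n := by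
    intro t n
    rw [show -t * (n:ℝ) = (n:ℝ) * (-t) by ring, ← Real.exp_nat_mul]
  -- finite sum of ν
  have hfin : ∀ k : ℤ, a ≤ k →
      ∑ m ∈ Finset.Icc a (k - 1), Real.exp (-α * ((k : ℝ) - (m : ℝ) - 1)) * ν m
        = E * (x ^ (k - a).toNat - y ^ (k - a).toNat) / (x - y) := by
    intro k hk
    rw [sum_Icc_int]
    set n := (k - a).toNat with hn_def
    have hkn : (k : ℝ) = (a : ℝ) + n := by
      have : k = a + (n : ℤ) := by omega
      rw [this]; push_cast; ring
    have hterm : ∀ i ∈ Finset.range n,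
        Real.exp (-α * ((k : ℝ) - ((a + i : ℤ) : ℝ) - 1)) * ν (a + i)
          = E * (x ^ i * y ^ (n - 1 - i)) := by
      intro i hi
      simp only [Finset.mem_range] at hi
      have h1 : ((a + i : ℤ) : ℝ) = (a : ℝ) + i := by push_cast; ring
      have h2 : (k : ℝ) - ((a + i : ℤ) : ℝ) - 1 = ((n - 1 - i : ℕ) : ℝ) := by
        rw [h1, hkn]
        have : (n - 1 - i : ℕ) = n - 1 - i := rfl
        push_cast [Nat.cast_sub (by omega : i ≤ n - 1), Nat.cast_sub (by omega : 1 ≤ n)]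
        ring
      have h3 : ((a + i : ℤ) - a).toNat = i := by omega
      rw [h2, hexp_pow α, hν_def]
      simp only [h3]
      rw [hy_def]
      ring
    rw [Finset.sum_congr rfl hterm, ← Finset.mul_sum]
    have hg : (∑ i ∈ Finset.range n, x ^ i * y ^ (n - 1 - i)) = (x ^ n - y ^ n) / (x - y) := by
      rw [eq_div_iff (ne_of_gt hP)]; exact geom_sum₂_mul x y n
    rw [hg]; ring
  -- tsum of ν
  have hterm : ∀ k : ℤ, a ≤ k → ∀ j : ℕ, Real.exp (-α * ((j : ℝ) + 1)) * ν (k + j)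
      = (E * x ^ (k - a).toNat * y) * (x * y) ^ j := by
    intro k hk j
    have h1 : -α * ((j : ℝ) + 1) = -α * (((j + 1 : ℕ)) : ℝ) := by push_cast; ring
    have h2 : ((k + j : ℤ) - a).toNat = (k - a).toNat + j := by omega
    rw [h1, hexp_pow α, hν_def]
    simp only [h2, ← hy_def]
    rw [mul_pow, pow_add, pow_succ]
    ring
  have hνsum : ∀ k : ℤ, a ≤ k →
      Summable fun j : ℕ => Real.exp (-α * ((j : ℝ) + 1)) * ν (k + j) := by
    intro k hk
    rw [funext (hterm k hk)]
    exact (summable_geometric_of_lt_one (by positivity) hxy1).mul_left _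
  have htail : ∀ k : ℤ, a ≤ k →
      (∑' j : ℕ, Real.exp (-α * ((j : ℝ) + 1)) * ν (k + j))
        = E * x ^ (k - a).toNat * y / (1 - x * y) := by
    intro k hk
    rw [tsum_congr (hterm k hk), tsum_mul_left, tsum_geometric_of_lt_one (by positivity) hxy1]
    field_simp
  -- ν satisfies the equation exactly
  have hνeq : ∀ k : ℤ, a ≤ k →
      ν k = D * Real.exp (-α * ((k : ℝ) - (a : ℝ)))
        + δ * ∑ m ∈ Finset.Icc a (k - 1), Real.exp (-α * ((k : ℝ) - (m : ℝ) - 1)) * ν m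
        + δ * ∑' j : ℕ, Real.exp (-α * ((j : ℝ) + 1)) * ν (k + j) := by
    intro k hk
    rw [hfin k hk, htail k hk]
    set n := (k - a).toNat with hn_def
    have hkn : (k : ℝ) - (a : ℝ) = (n : ℝ) := by
      have : k = a + (n : ℤ) := by omega
      rw [this]; push_cast; ring
    rw [hkn, hexp_pow α, ← hy_def]
    simp only [hν_def]
    have hED : δ * E = D * (x - y) := by rw [hE_def]; field_simp
    have hd2 : δ * E / (x - y) = D := by
      rw [hED, mul_div_assoc, div_self (ne_of_gt hP), mul_one]
    have hd1 : δ * y / (1 - x * y) = 1 - δ / (x - y) := by linarith [hden]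
    have e1 : δ * (E * (x ^ n - y ^ n) / (x - y)) = D * (x ^ n - y ^ n) := by
      rw [show δ * (E * (x ^ n - y ^ n) / (x - y))
          = δ * E / (x - y) * (x ^ n - y ^ n) by ring, hd2]
    have hkey : δ * E * y / (1 - x * y) = E - D := by
      calc δ * E * y / (1 - x * y) = E * (δ * y / (1 - x * y)) := by ring
        _ = E * (1 - δ / (x - y)) := by rw [hd1]
        _ = E - δ * E / (x - y) := by ring
        _ = E - D := by rw [hd2]
    have e2 : δ * (E * x ^ n * y / (1 - x * y)) = (E - D) * x ^ n := by
      rw [show δ * (E * x ^ n * y / (1 - x * y))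
          = δ * E * y / (1 - x * y) * x ^ n by ring, hkey]
    rw [e1, e2]; ring
  -- sup of positive part of the difference
  obtain ⟨C, hC⟩ := hbdd
  set g : ℤ → ℝ := fun k => max (μ k - ν k) 0 with hg_def
  have hg_nonneg : ∀ k : ℤ, 0 ≤ g k := fun k => le_max_right _ _
  have hne : (g '' Set.Ici a).Nonempty := ⟨g a, ⟨a, le_refl a, rfl⟩⟩
  have hbdd' : BddAbove (g '' Set.Ici a) := by
    refine ⟨max C 0, ?_⟩
    rintro r ⟨k, hk, rfl⟩
    have h1 := hC k hk
    have h2 := hν_nonneg k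
    exact max_le_max (by linarith) le_rfl
  set S := sSup (g '' Set.Ici a) with hS_def
  have hgS : ∀ k : ℤ, a ≤ k → g k ≤ S := fun k hk => le_csSup hbdd' ⟨k, hk, rfl⟩
  have hS0 : 0 ≤ S := le_trans (hg_nonneg a) (hgS a le_rfl)
  have hwS : ∀ k : ℤ, a ≤ k → μ k - ν k ≤ S :=
    fun k hk => le_trans (le_max_left _ _) (hgS k hk)
  -- geometric bound on the finite sum of coefficients
  have hcoef : ∀ k : ℤ, a ≤ k →
      ∑ m ∈ Finset.Icc a (k - 1), Real.exp (-α * ((k : ℝ) - (m : ℝ) - 1)) ≤ (1 - y)⁻¹ := by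
    intro k hk
    rw [sum_Icc_int]
    set n := (k - a).toNat with hn_def
    have hkn : (k : ℝ) = (a : ℝ) + n := by
      have : k = a + (n : ℤ) := by omega
      rw [this]; push_cast; ring
    have ht : ∀ i ∈ Finset.range n,
        Real.exp (-α * ((k : ℝ) - ((a + i : ℤ) : ℝ) - 1)) = y ^ (n - 1 - i) := by
      intro i hi
      simp only [Finset.mem_range] at hi
      have h2 : (k : ℝ) - ((a + i : ℤ) : ℝ) - 1 = ((n - 1 - i : ℕ) : ℝ) := by
        rw [hkn]
        push_cast [Nat.cast_sub (by omega : i ≤ n - 1), Nat.cast_sub (by omega : 1 ≤ n)]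
        ring
      rw [h2, hexp_pow α, ← hy_def]
    rw [Finset.sum_congr rfl ht, Finset.sum_range_reflect]
    calc ∑ i ∈ Finset.range n, y ^ i
        ≤ ∑' i : ℕ, y ^ i :=
          Summable.sum_le_tsum _ (fun i _ => by positivity)
            (summable_geometric_of_lt_one hy0.le hy1)
      _ = (1 - y)⁻¹ := tsum_geometric_of_lt_one hy0.le hy1
  -- contraction estimate
  have hcontr : ∀ k : ℤ, a ≤ k → μ k - ν k ≤ δ * (1 + y) * (1 - y)⁻¹ * S := by
    intro k hk
    have h1 := hineq k hk
    have h2 := hνeq k hk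
    -- finite part
    have hfinle : ∑ m ∈ Finset.Icc a (k - 1), Real.exp (-α * ((k : ℝ) - (m : ℝ) - 1)) * μ m
        - ∑ m ∈ Finset.Icc a (k - 1), Real.exp (-α * ((k : ℝ) - (m : ℝ) - 1)) * ν m
        ≤ S * (1 - y)⁻¹ := by
      rw [← Finset.sum_sub_distrib]
      calc ∑ m ∈ Finset.Icc a (k - 1),
            (Real.exp (-α * ((k : ℝ) - (m : ℝ) - 1)) * μ m
              - Real.exp (-α * ((k : ℝ) - (m : ℝ) - 1)) * ν m)
          ≤ ∑ m ∈ Finset.Icc a (k - 1), Real.exp (-α * ((k : ℝ) - (m : ℝ) - 1)) * S := by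
            apply Finset.sum_le_sum
            intro m hm
            rw [Finset.mem_Icc] at hm
            rw [← mul_sub]
            exact mul_le_mul_of_nonneg_left (hwS m hm.1) (Real.exp_pos _).le
        _ = (∑ m ∈ Finset.Icc a (k - 1), Real.exp (-α * ((k : ℝ) - (m : ℝ) - 1))) * S :=
            (Finset.sum_mul _ _ _).symm
        _ ≤ (1 - y)⁻¹ * S := by
            apply mul_le_mul_of_nonneg_right (hcoef k hk) hS0
        _ = S * (1 - y)⁻¹ := by ring
    -- tail part
    have htailsum : Summable fun j : ℕ => Real.exp (-α * ((j : ℝ) + 1)) * S := by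
      have : (fun j : ℕ => Real.exp (-α * ((j : ℝ) + 1)) * S)
          = fun j : ℕ => (y * S) * y ^ j := by
        funext j
        have h1' : -α * ((j : ℝ) + 1) = -α * (((j + 1 : ℕ)) : ℝ) := by push_cast; ring
        rw [h1', hexp_pow α, ← hy_def, pow_succ]
        ring
      rw [this]
      exact (summable_geometric_of_lt_one hy0.le hy1).mul_left _
    have htailval : (∑' j : ℕ, Real.exp (-α * ((j : ℝ) + 1)) * S) = y * S * (1 - y)⁻¹ := by
      have : (fun j : ℕ => Real.exp (-α * ((j : ℝ) + 1)) * S)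
          = fun j : ℕ => (y * S) * y ^ j := by
        funext j
        have h1' : -α * ((j : ℝ) + 1) = -α * (((j + 1 : ℕ)) : ℝ) := by push_cast; ring
        rw [h1', hexp_pow α, ← hy_def, pow_succ]
        ring
      rw [this, tsum_mul_left, tsum_geometric_of_lt_one hy0.le hy1]
    have htaille : (∑' j : ℕ, Real.exp (-α * ((j : ℝ) + 1)) * μ (k + j))
        - (∑' j : ℕ, Real.exp (-α * ((j : ℝ) + 1)) * ν (k + j))
        ≤ y * S * (1 - y)⁻¹ := by
      rw [← Summable.tsum_sub (hsum k hk) (hνsum k hk), ← htailval]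
      apply Summable.tsum_le_tsum _ ((hsum k hk).sub (hνsum k hk)) htailsum
      intro j
      rw [← mul_sub]
      exact mul_le_mul_of_nonneg_left (hwS (k + j) (by omega)) (Real.exp_pos _).le
    linarith [mul_le_mul_of_nonneg_left hfinle hδ.le,
      mul_le_mul_of_nonneg_left htaille hδ.le, h1, h2]
  -- conclude S ≤ 0
  have hSS : S ≤ δ * (1 + y) * (1 - y)⁻¹ * S := by
    apply csSup_le hne
    rintro r ⟨k, hk, rfl⟩
    have h1 : (0:ℝ) ≤ δ * (1 + y) * (1 - y)⁻¹ * S :=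
      mul_nonneg (mul_nonneg (mul_nonneg hδ.le (by linarith))
        (inv_nonneg.mpr (by linarith))) hS0
    exact max_le (hcontr k hk) h1
  have hSle : S ≤ 0 := by
    have h2 : δ * (1 + y) * (1 - y)⁻¹ * S ≤ 1 * S :=
      mul_le_mul_of_nonneg_right hσ.le hS0
    by_contra h
    push_neg at h
    have h3 : δ * (1 + y) * (1 - y)⁻¹ * S < 1 * S :=
      mul_lt_mul_of_pos_right hσ h
    linarith [hSS, h3]
  -- final conclusion
  intro k hk
  have hμν : μ k ≤ ν k := by
    have := hwS k hk
    linarith [hSle]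
  have hkn : (k : ℝ) - (a : ℝ) = (((k - a).toNat : ℕ) : ℝ) := by
    have h0 : ((k - a).toNat : ℤ) = k - a := Int.toNat_of_nonneg (by omega)
    have h1 := congrArg (fun z : ℤ => (z : ℝ)) h0
    push_cast at h1
    linarith
  rw [hexp_ab, hkn, hexp_pow β, hβx, hE_alt]
  calc μ k ≤ ν k := hμν
    _ = E * x ^ (k - a).toNat := by rw [hν_def]
    _ ≤ E * x ^ (k - a).toNat := le_rfl
end
end

section
/- Let b be a fixed integer and let {μ_k}_{k=−∞}^{b} be a bounded sequence of nonnegative real numbers for which there exist positive numbers D, α, δ such that for all k ≤ b: μ_k ≤ D e^{−α(b−k)} + δ · Σ_{m=−∞}^{k−1} e^{−α(k−m−1)} μ_m + δ · Σ_{m=k}^{b−1} e^{−α(m+1−k)} μ_m (sums over empty ranges are 0). If σ = δ(1+e^{−α})(1−e^{−α})^{−1} < 1, then for all k ≤ b, μ_k ≤ [D / (1 − δe^{−γ}/(1 − e^{−(α+γ)}))] · e^{−γ(b−k)}, where γ = β + log(1 + 2δ sinh α) and β = −log(cosh α − √(sinh² α − 2δ sinh α)). -/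
noncomputable section

open Real Finset

set_option maxHeartbeats 1000000

/-- Reindex an integer `Icc` sum as a `range` sum. -/
lemma sum_Icc_int_eq (f : ℤ → ℝ) (k c : ℤ) :
    ∑ m ∈ Finset.Icc k c, f m = ∑ i ∈ Finset.range (c + 1 - k).toNat, f (k + i) := by
  refine Finset.sum_nbij' (fun m => (m - k).toNat) (fun i => k + (i : ℤ)) ?_ ?_ ?_ ?_ ?_
  · intro m hm; simp only [Finset.mem_Icc] at hm; simp only [Finset.mem_range]; omega
  · intro i hi; simp only [Finset.mem_range] at hi; simp only [Finset.mem_Icc]; omega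
  · intro m hm; simp only [Finset.mem_Icc] at hm; show k + ((m - k).toNat : ℤ) = m; omega
  · intro i hi; simp only [Finset.mem_range] at hi; show (k + (i:ℤ) - k).toNat = i; omega
  · intro m hm; simp only [Finset.mem_Icc] at hm
    have h2 : k + (((m - k).toNat : ℕ) : ℤ) = m := by omega
    change _ = f (k + (((m - k).toNat : ℕ) : ℤ))
    rw [h2]

lemma aux1 (a δ S Cc : ℝ) (ha0 : 0 < a) (ha1 : a < 1) (hδ : 0 < δ) (hσ : δ*(1+a) < 1-a)
    (hS : 2*a*S = 1-a^2) (hC : 2*a*Cc = 1+a^2) (hcs2 : Cc^2 - S^2 = 1) :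
    0 < S ∧ 0 ≤ Cc - 1 ∧ (Cc-1)^2 < S^2 - 2*δ*S := by
  have h1a : 0 < 1 - a := by linarith
  have hSpos : 0 < S := by
    by_contra hcon
    push_neg at hcon
    have h5 : 2*a*S ≤ 0 := mul_nonpos_of_nonneg_of_nonpos (by positivity) hcon
    nlinarith [ha0, ha1]
  have hC1 : 0 ≤ Cc - 1 := by
    have h4 : 2*a*(Cc-1) = (1-a)^2 := by linear_combination hC
    by_contra hcon
    push_neg at hcon
    have h5 : 2*a*(Cc-1) < 0 := mul_neg_of_pos_of_neg (by positivity) (by linarith)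
    nlinarith [sq_nonneg (1-a)]
  have e1 : a * (S^2 - 2*δ*S - (Cc-1)^2) = (1-a)*(1-a-δ*(1+a)) := by
    linear_combination hC - δ*hS - a*hcs2
  refine ⟨hSpos, hC1, ?_⟩
  nlinarith [e1, mul_pos h1a (show (0:ℝ) < 1-a-δ*(1+a) by linarith)]

lemma aux2 (a δ S Cc s x : ℝ) (ha0 : 0 < a) (ha1 : a < 1) (hδ : 0 < δ)
    (hσ : δ*(1+a) < 1-a)
    (hS : 2*a*S = 1-a^2) (hC : 2*a*Cc = 1+a^2) (hcs2 : Cc^2-S^2 = 1) (hcssinh : Cc - S = a)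
    (hSpos : 0 < S) (hC1 : 0 ≤ Cc - 1) (hin' : (Cc-1)^2 < S^2-2*δ*S)
    (hs0 : 0 ≤ s) (hs2 : s^2 = S^2 - 2*δ*S) (hx0 : 0 < x)
    (hx_eq : (1 + 2*δ*S) * x = Cc - s) :
    a < x ∧ x < 1 ∧ (a + δ*(1-a^2))*x^2 - (1+a^2)*x + a = 0 := by
  have hδS : 0 < δ*S := mul_pos hδ hSpos
  have h1q : (0:ℝ) < 1 + 2*δ*S := by linarith
  have hqa : a*(2*δ*S) = δ*(1-a^2) := by linear_combination δ*hS
  refine ⟨?_, ?_, ?_⟩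
  · -- a < x
    have h2aδ : 2*a*δ < 1 := by
      linarith [mul_nonneg hδ.le (sub_nonneg.mpr ha1.le)]
    have hT : 0 < S - 2*a*δ*S := by
      linarith [mul_pos hSpos (show (0:ℝ) < 1-2*a*δ by linarith)]
    have e2 : (S - 2*a*δ*S)^2 - s^2 = 2*δ*S - 4*a*δ*S^2 + 4*a^2*δ^2*S^2 := by
      linear_combination -hs2
    have e3 : 2*δ*S - 4*a*δ*S^2 = 2*δ*S*a^2 := by
      linear_combination (-2*δ*S)*hS
    have hT2 : s^2 < (S - 2*a*δ*S)^2 := by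
      linarith [e2, e3, mul_pos hδS (mul_pos ha0 ha0), sq_nonneg (2*a*δ*S)]
    have h1' : s < S - 2*a*δ*S := by
      by_contra hcon
      push_neg at hcon
      have := pow_le_pow_left₀ hT.le hcon 2
      linarith [hT2]
    have h1 : a*(1+2*δ*S) < Cc - s := by linarith [h1', hcssinh]
    have h3 : a * (1+2*δ*S) < x * (1+2*δ*S) := by rw [mul_comm x _, hx_eq]; exact h1
    exact lt_of_mul_lt_mul_right h3 (by linarith)
  · have hsgt : Cc - 1 < s := by
      by_contra hcon
      push_neg at hcon
      have := pow_le_pow_left₀ hs0 hcon 2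
      linarith [hin', hs2]
    have h2 : Cc - s < 1 + 2*δ*S := by linarith [hsgt, hδS]
    have h3 : x * (1+2*δ*S) < 1 * (1+2*δ*S) := by
      rw [mul_comm x _, hx_eq, one_mul]; exact h2
    exact lt_of_mul_lt_mul_right h3 (by linarith)
  · have key : (1+2*δ*S) * ((1+2*δ*S)*x^2 - 2*Cc*x + 1) = 0 := by
      linear_combination ((1+2*δ*S)*x + Cc - s - 2*Cc)*hx_eq + hs2 - hcs2
    have key2 : (1+2*δ*S)*x^2 - 2*Cc*x + 1 = 0 := by
      rcases mul_eq_zero.mp key with h | h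
      · linarith
      · exact h
    linear_combination a*key2 - x^2*hqa + x*hC

lemma root_facts (α δ : ℝ) (hα : 0 < α) (hδ : 0 < δ)
    (hσ : δ * (1 + Real.exp (-α)) * (1 - Real.exp (-α))⁻¹ < 1)
    (β γ : ℝ)
    (hβ : β = -Real.log (Real.cosh α - Real.sqrt (Real.sinh α ^ 2 - 2 * δ * Real.sinh α)))
    (hγ : γ = β + Real.log (1 + 2 * δ * Real.sinh α)) :
    Real.exp (-α) < Real.exp (-γ) ∧ Real.exp (-γ) < 1 ∧
      (Real.exp (-α) + δ * (1 - Real.exp (-α) ^ 2)) * Real.exp (-γ) ^ 2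
        - (1 + Real.exp (-α) ^ 2) * Real.exp (-γ) + Real.exp (-α) = 0 := by
  set a := Real.exp (-α) with ha
  have ha0 : 0 < a := Real.exp_pos _
  have ha1 : a < 1 := by
    rw [ha, Real.exp_lt_one_iff]; linarith
  have h1a : 0 < 1 - a := by linarith
  rw [← div_eq_mul_inv, div_lt_one h1a] at hσ
  set S := Real.sinh α with hSdef
  set Cc := Real.cosh α with hCdef
  have hexpα : Real.exp α = a⁻¹ := by
    rw [ha, ← Real.exp_neg, neg_neg]
  have hS : 2 * a * S = 1 - a ^ 2 := by
    rw [hSdef, Real.sinh_eq, hexpα, ← ha]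
    field_simp
  have hC : 2 * a * Cc = 1 + a ^ 2 := by
    rw [hCdef, Real.cosh_eq, hexpα, ← ha]
    field_simp
  have hcs2 : Cc ^ 2 - S ^ 2 = 1 := Real.cosh_sq_sub_sinh_sq α
  have hcssinh : Cc - S = a := by
    rw [hCdef, hSdef, Real.cosh_sub_sinh, ha]
  set s := Real.sqrt (S ^ 2 - 2 * δ * S) with hs
  have hs0 : 0 ≤ s := Real.sqrt_nonneg _
  clear_value S Cc
  obtain ⟨hSpos, hC1, hin'⟩ := aux1 a δ S Cc ha0 ha1 hδ hσ hS hC hcs2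
  have hin : 0 ≤ S ^ 2 - 2 * δ * S := le_of_lt (lt_of_le_of_lt (sq_nonneg _) hin')
  have hs2 : s ^ 2 = S ^ 2 - 2 * δ * S := by rw [hs, Real.sq_sqrt hin]
  clear_value s
  have hslt : s < S := by
    by_contra hcon
    push_neg at hcon
    have := pow_le_pow_left₀ hSpos.le hcon 2
    linarith [hs2, mul_pos hδ hSpos]
  have hcspos : 0 < Cc - s := by linarith
  have hexpβ : Real.exp (-β) = Cc - s := by
    rw [hβ, neg_neg, Real.exp_log hcspos]
  have h1q : (0:ℝ) < 1 + 2 * δ * S := by positivity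
  have hx_eq : (1 + 2 * δ * S) * Real.exp (-γ) = Cc - s := by
    rw [hγ, neg_add, Real.exp_add, hexpβ]
    rw [Real.exp_neg, Real.exp_log h1q]
    field_simp
  exact aux2 a δ S Cc s (Real.exp (-γ)) ha0 ha1 hδ hσ hS hC hcs2 hcssinh hSpos hC1 hin'
    hs0 hs2 (Real.exp_pos _) hx_eq

/-- discrete Gronwall-type lemma on `(-∞, b]` (Lemma 3 (ii) of
Zhou–Lu–Zhang). The infinite tail `Σ_{m=-∞}^{k-1} e^{-α(k-m-1)} μ_m` is written as
`Σ'_{j : ℕ} e^{-α j} μ_{k-1-j}` via the substitution `m = k - 1 - j`. -/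
theorem statement16 (b : ℤ) (μ : ℤ → ℝ) (D α δ : ℝ)
    (hD : 0 < D) (hα : 0 < α) (hδ : 0 < δ)
    (hnonneg : ∀ k : ℤ, k ≤ b → 0 ≤ μ k)
    (hbdd : ∃ C : ℝ, ∀ k : ℤ, k ≤ b → μ k ≤ C)
    (hsum : ∀ k : ℤ, k ≤ b →
      Summable fun j : ℕ => Real.exp (-α * (j : ℝ)) * μ (k - 1 - j))
    (hineq : ∀ k : ℤ, k ≤ b →
      μ k ≤ D * Real.exp (-α * ((b : ℝ) - (k : ℝ)))
        + δ * ∑' j : ℕ, Real.exp (-α * (j : ℝ)) * μ (k - 1 - j)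
        + δ * ∑ m ∈ Finset.Icc k (b - 1), Real.exp (-α * ((m : ℝ) + 1 - (k : ℝ))) * μ m)
    (hσ : δ * (1 + Real.exp (-α)) * (1 - Real.exp (-α))⁻¹ < 1)
    (β γ : ℝ)
    (hβ : β = -Real.log (Real.cosh α - Real.sqrt (Real.sinh α ^ 2 - 2 * δ * Real.sinh α)))
    (hγ : γ = β + Real.log (1 + 2 * δ * Real.sinh α)) :
    ∀ k : ℤ, k ≤ b →
      μ k ≤ D / (1 - δ * Real.exp (-γ) / (1 - Real.exp (-(α + γ))))
        * Real.exp (-γ * ((b : ℝ) - (k : ℝ))) := by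
  obtain ⟨C, hC⟩ := hbdd
  obtain ⟨hax, hx1, hquad⟩ := root_facts α δ hα hδ hσ β γ hβ hγ
  set a := Real.exp (-α) with ha
  set x := Real.exp (-γ) with hx
  have ha0 : 0 < a := Real.exp_pos _
  have hx0 : 0 < x := Real.exp_pos _
  have ha1 : a < 1 := lt_trans hax hx1
  have h1a : (0:ℝ) < 1 - a := by linarith
  have hxa : (0:ℝ) < x - a := by linarith
  have hax1 : a * x < 1 := by nlinarith
  have h1ax : (0:ℝ) < 1 - a * x := by linarith
  -- exponent-to-power conversion
  have hpow : ∀ (t : ℝ) (n : ℕ), Real.exp (-t * (n:ℝ)) = Real.exp (-t) ^ n := by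
    intro t n
    rw [show -t * (n:ℝ) = (n:ℝ) * (-t) by ring, Real.exp_nat_mul]
  -- balance identity
  have hpoly : δ*x*(x-a) + δ*(a*x)*(1-a*x) = (1-a*x)*(x-a) := by
    linear_combination hquad
  have hbal : δ * x / (1 - a*x) + δ * (a*x) / (x - a) = 1 := by
    rw [div_add_div _ _ (ne_of_gt h1ax) (ne_of_gt hxa), div_eq_one_iff_eq
      (by positivity)]
    linear_combination hpoly
  set ρ := δ * x / (1 - a*x) with hρdef
  have hρpos : 0 < ρ := by positivity
  have h1ρ : 1 - ρ = δ * (a*x) / (x - a) := by linarith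
  have h1ρpos : 0 < 1 - ρ := by rw [h1ρ]; positivity
  set K := D / (1 - ρ) with hK
  have hK0 : 0 < K := div_pos hD h1ρpos
  have hDK : D = K * (δ * (a*x) / (x - a)) := by
    rw [hK, ← h1ρ]; field_simp
  clear_value ρ K
  -- the supersolution identity
  have hsuper : ∀ N : ℕ, D * a^N + δ*K*(x^(N+1)*(1-a*x)⁻¹)
      + δ*K*(∑ i ∈ Finset.range N, a^(i+1)*x^(N-i)) = K*x^N := by
    intro N
    have hg := geom_sum₂_mul x a N
    have hre : (∑ i ∈ Finset.range N, a^(i+1)*x^(N-i))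
        = a*x*(∑ i ∈ Finset.range N, x^i*a^(N-1-i)) := by
      rw [Finset.mul_sum, ← Finset.sum_range_reflect]
      apply Finset.sum_congr rfl
      intro i hi
      simp only [Finset.mem_range] at hi
      have h3 : N - (N-1-i) = i+1 := by omega
      rw [h3, pow_succ, pow_succ]
      ring
    have hSN : (∑ i ∈ Finset.range N, a^(i+1)*x^(N-i))
        = a*x*(x^N - a^N) / (x - a) := by
      rw [eq_div_iff (ne_of_gt hxa), hre, mul_assoc, hg]
    rw [hSN, hDK]
    field_simp
    linear_combination (x^N)*hpoly
  -- geometric series facts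
  have hsum_geo_a : Summable (fun j : ℕ => a^j) := summable_geometric_of_lt_one ha0.le ha1
  have hsum_geo_ax : Summable (fun j : ℕ => (a*x)^j) :=
    summable_geometric_of_lt_one (by positivity) hax1
  have htsum_a : ∑' j : ℕ, a^j = (1-a)⁻¹ := tsum_geometric_of_lt_one ha0.le ha1
  have htsum_ax : ∑' j : ℕ, (a*x)^j = (1-a*x)⁻¹ :=
    tsum_geometric_of_lt_one (by positivity) hax1
  -- the supremum
  set f : ℤ → ℝ := fun k => μ k - K * x^((b-k).toNat) with hf
  have hfub : ∀ y ∈ f '' {k : ℤ | k ≤ b}, y ≤ C := by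
    rintro y ⟨k, hk, rfl⟩
    have h1 : 0 ≤ K * x^((b-k).toNat) := by positivity
    have h2 := hC k hk
    simp only [hf]
    linarith
  have hSne : (f '' {k : ℤ | k ≤ b}).Nonempty := ⟨f b, b, le_refl b, rfl⟩
  have hSbdd : BddAbove (f '' {k : ℤ | k ≤ b}) := ⟨C, hfub⟩
  set M := sSup (f '' {k : ℤ | k ≤ b}) with hM
  have hfM : ∀ k : ℤ, k ≤ b → f k ≤ M := fun k hk => le_csSup hSbdd ⟨k, hk, rfl⟩
  set Mp := max M 0 with hMp
  have hMp0 : 0 ≤ Mp := le_max_right _ _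
  have hμle : ∀ k : ℤ, k ≤ b → μ k ≤ K * x^((b-k).toNat) + Mp := by
    intro k hk
    have h1 := hfM k hk
    have h2 : M ≤ Mp := le_max_left _ _
    simp only [hf] at h1
    linarith
  -- the main estimate
  have hest : ∀ k : ℤ, k ≤ b → f k ≤ (δ*(1+a)*(1-a)⁻¹) * Mp := by
    intro k hk
    obtain ⟨N, hN⟩ : ∃ N : ℕ, (N:ℤ) = b - k := ⟨(b-k).toNat, Int.toNat_of_nonneg (by omega)⟩
    have hcast : ((b:ℝ) - (k:ℝ)) = (N:ℝ) := by
      have h5 := congrArg (fun z : ℤ => (z:ℝ)) hN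
      push_cast at h5
      linarith
    -- bound the infinite tail
    have hT1 : (∑' j : ℕ, Real.exp (-α*(j:ℝ)) * μ (k-1-(j:ℤ)))
        ≤ K * x^(N+1) * (1-a*x)⁻¹ + Mp * (1-a)⁻¹ := by
      have hle : ∀ j : ℕ, Real.exp (-α*(j:ℝ)) * μ (k-1-(j:ℤ))
          ≤ K * x^(N+1) * (a*x)^j + Mp * a^j := by
        intro j
        have hkj : (k - 1 - (j:ℤ) : ℤ) ≤ b := by omega
        have hNt : (b - (k-1-(j:ℤ))).toNat = N + 1 + j := by omega
        have hμj : μ (k-1-(j:ℤ)) ≤ K * x^(N+1+j) + Mp := by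
          have h6 := hμle _ hkj
          rwa [hNt] at h6
        rw [hpow α j]
        calc a^j * μ (k-1-(j:ℤ)) ≤ a^j * (K * x^(N+1+j) + Mp) :=
              mul_le_mul_of_nonneg_left hμj (by positivity)
          _ = K * x^(N+1) * (a*x)^j + Mp * a^j := by
              rw [pow_add x (N+1) j, mul_pow]; ring
      have hs1 : Summable (fun j : ℕ => K * x^(N+1) * (a*x)^j) := hsum_geo_ax.mul_left _
      have hs2 : Summable (fun j : ℕ => Mp * a^j) := hsum_geo_a.mul_left _
      calc (∑' j : ℕ, Real.exp (-α*(j:ℝ)) * μ (k-1-(j:ℤ)))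
          ≤ ∑' j : ℕ, (K * x^(N+1) * (a*x)^j + Mp * a^j) :=
            Summable.tsum_le_tsum hle (hsum k hk) (hs1.add hs2)
        _ = K * x^(N+1) * (1-a*x)⁻¹ + Mp * (1-a)⁻¹ := by
            rw [Summable.tsum_add hs1 hs2, tsum_mul_left, tsum_mul_left, htsum_ax, htsum_a]
    -- bound the finite sum
    have hT2 : (∑ m ∈ Finset.Icc k (b-1), Real.exp (-α * ((m:ℝ) + 1 - (k:ℝ))) * μ m)
        ≤ K * (∑ i ∈ Finset.range N, a^(i+1)*x^(N-i)) + Mp * (a*(1-a)⁻¹) := by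
      rw [sum_Icc_int_eq (fun m : ℤ => Real.exp (-α * ((m:ℝ) + 1 - (k:ℝ))) * μ m) k (b-1)]
      have hNN : (b - 1 + 1 - k).toNat = N := by omega
      rw [hNN]
      have hstep : ∀ i ∈ Finset.range N,
          (fun m : ℤ => Real.exp (-α * ((m:ℝ) + 1 - (k:ℝ))) * μ m) (k + (i:ℤ))
            ≤ K*(a^(i+1)*x^(N-i)) + Mp*a^(i+1) := by
        intro i hi
        simp only [Finset.mem_range] at hi
        show Real.exp (-α * (((k + (i:ℤ) : ℤ):ℝ) + 1 - (k:ℝ))) * μ (k + (i:ℤ))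
            ≤ K*(a^(i+1)*x^(N-i)) + Mp*a^(i+1)
        have hkib : (k + (i:ℤ) : ℤ) ≤ b := by omega
        have hNt : (b - (k+(i:ℤ))).toNat = N - i := by omega
        have hμm : μ (k+(i:ℤ)) ≤ K * x^(N-i) + Mp := by
          have h6 := hμle _ hkib
          rwa [hNt] at h6
        have hcc : ((k + (i:ℤ) : ℤ):ℝ) + 1 - (k:ℝ) = ((i+1 : ℕ):ℝ) := by
          push_cast; ring
        rw [hcc, hpow α (i+1)]
        calc a^(i+1) * μ (k+(i:ℤ)) ≤ a^(i+1) * (K * x^(N-i) + Mp) :=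
              mul_le_mul_of_nonneg_left hμm (by positivity)
          _ = K*(a^(i+1)*x^(N-i)) + Mp*a^(i+1) := by ring
      refine le_trans (Finset.sum_le_sum hstep) ?_
      have heq : (∑ i ∈ Finset.range N, (K*(a^(i+1)*x^(N-i)) + Mp*a^(i+1)))
          = K * (∑ i ∈ Finset.range N, a^(i+1)*x^(N-i)) + Mp * (∑ i ∈ Finset.range N, a^(i+1)) := by
        rw [Finset.sum_add_distrib, Finset.mul_sum, Finset.mul_sum]
      rw [heq]
      have hgb : (∑ i ∈ Finset.range N, a^(i+1)) ≤ a*(1-a)⁻¹ := by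
        have h1 : (∑ i ∈ Finset.range N, a^(i+1)) = a * ∑ i ∈ Finset.range N, a^i := by
          rw [Finset.mul_sum]
          exact Finset.sum_congr rfl fun i _ => by rw [pow_succ]; ring
        have h2 : (∑ i ∈ Finset.range N, a^i) ≤ (1-a)⁻¹ := by
          have h3 := Summable.sum_le_tsum (Finset.range N) (fun i _ => by positivity) hsum_geo_a
          rwa [htsum_a] at h3
        rw [h1]
        exact mul_le_mul_of_nonneg_left h2 ha0.le
      linarith [mul_le_mul_of_nonneg_left hgb hMp0]
    -- assemble
    have hmain := hineq k hk
    rw [hcast, hpow α N] at hmain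
    have e5 := mul_le_mul_of_nonneg_left hT1 hδ.le
    have e6 := mul_le_mul_of_nonneg_left hT2 hδ.le
    have hsup := hsuper N
    have hfin : μ k ≤ K*x^N + (δ*(1+a)*(1-a)⁻¹) * Mp := by nlinarith [hmain, e5, e6, hsup]
    have hNb : (b-k).toNat = N := by omega
    simp only [hf, hNb]
    linarith [hfin]
  -- conclude M ≤ 0
  have hMle : M ≤ (δ*(1+a)*(1-a)⁻¹) * Mp := by
    apply csSup_le hSne
    rintro y ⟨k, hk, rfl⟩
    exact hest k hk
  have hσ0pos : 0 < δ*(1+a)*(1-a)⁻¹ := by positivity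
  have hM0 : M ≤ 0 := by
    by_contra hcon
    push_neg at hcon
    have hMpM : Mp = M := max_eq_left hcon.le
    rw [hMpM] at hMle
    nlinarith [hMle, hσ, hcon]
  -- final conclusion
  intro k hk
  have h0 : ((b-k).toNat : ℤ) = b - k := Int.toNat_of_nonneg (by omega)
  have hfk := hfM k hk
  simp only [hf] at hfk
  have hμk : μ k ≤ K * x^((b-k).toNat) := by linarith [hM0]
  have hcast : ((b:ℝ) - (k:ℝ)) = (((b-k).toNat : ℕ):ℝ) := by
    have h5 := congrArg (fun z : ℤ => (z:ℝ)) h0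
    push_cast at h5
    linarith
  have hax_exp : Real.exp (-(α+γ)) = a*x := by
    rw [neg_add, Real.exp_add, ← ha, ← hx]
  have hconst : D / (1 - δ * x / (1 - Real.exp (-(α + γ)))) = K := by
    rw [hax_exp, hK, hρdef]
  rw [hcast, hpow γ ((b-k).toNat), ← hx, hconst]
  exact hμk
end
end
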